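/- arXiv:hep-th/9807144 — 6 statements merged into one kernel-verified Lean document; each statement's English description precedes it below -/
import Mathlib

section
/- For all u, v both in NS^(m) (or both in R^(m)), the sum over w ∈ NS^(m) of S^(m)_{u,w} · S^(m)_{w,v} equals 1 if u = v* and 0 otherwise, where * denotes the conjugation (j,k)* = (k,j) for k ≠ 0 and (m-j,0) for k = 0. -/
open Complex Finset

/-- The modular S-matrix of the N=2 superconformal algebra at level `m`. -/
noncomputable def Smat (m : ℕ) (u v : ℝ × ℝ) : ℂ :=
  (2 / (m : ℂ)) * Complex.exp (Real.pi * Complex.I * (((u.1 - u.2) * (v.1 - v.2) / m : ℝ) : ℂ)) *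
    Complex.sin (((Real.pi * (u.1 + u.2) * (v.1 + v.2) / m : ℝ) : ℂ))

/-- The Neveu-Schwarz index set `NS^(m)`:
pairs of half-odd-integers `(j,k)` with `0 < j`, `0 < k`, `j + k < m`. -/
noncomputable def NSfin (m : ℕ) : Finset (ℝ × ℝ) :=
  ((Finset.range m ×ˢ Finset.range m).filter fun p => p.1 + p.2 + 1 < m).image
    fun p => ((p.1 : ℝ) + 1 / 2, (p.2 : ℝ) + 1 / 2)

/-- The Ramond index set `R^(m)`:
integer pairs `(j,k)` with `0 < j`, `0 < j + k < m`, `0 ≤ k < m`. -/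
noncomputable def Rfin (m : ℕ) : Finset (ℝ × ℝ) :=
  ((Finset.range m ×ˢ Finset.range m).filter fun p => 1 ≤ p.1 ∧ p.1 + p.2 < m).image
    fun p => ((p.1 : ℝ), (p.2 : ℝ))

/-- The full index set `A^(m) = NS^(m) ∪ R^(m)`. -/
noncomputable def Afin (m : ℕ) : Finset (ℝ × ℝ) := NSfin m ∪ Rfin m

/-- The conjugation `(j,k)* = (k,j)` if `k ≠ 0`, `(m-j, 0)` if `k = 0`. -/
noncomputable def conjA (m : ℕ) (u : ℝ × ℝ) : ℝ × ℝ :=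
  if u.2 = 0 then ((m : ℝ) - u.1, 0) else (u.2, u.1)

/-- `J(a,b) = ∑ e^{iaj} e^{ibk}` over integer pairs `(j,k)` with
`0 < k < m`, `-k < j < k` and `j + k` odd. -/
noncomputable def Jsum (m : ℕ) (a b : ℂ) : ℂ :=
  ∑ k ∈ Finset.Ioo (0 : ℤ) (m : ℤ),
    ∑ j ∈ (Finset.Ioo (-k) k).filter fun j => Odd (j + k),
      Complex.exp (Complex.I * a * j) * Complex.exp (Complex.I * b * k)

/-- `I(a,b) = J(a,b) + J(a,-b)`. -/
noncomputable def Isum (m : ℕ) (a b : ℂ) : ℂ := Jsum m a b + Jsum m a (-b)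

/-- The fusion coefficient `N_{u,u',u''}` given by the modified Verlinde formula. -/
noncomputable def Nfus (m : ℕ) (u u' u'' : ℝ × ℝ) : ℂ :=
  ∑ v ∈ NSfin m,
    Smat m u v * Smat m u' v * Smat m u'' v / Smat m (1 / 2, 1 / 2) v

/-- The fusion coefficient `N_{u,u'}^{u''}` (with conjugated third entry). -/
noncomputable def Ncof (m : ℕ) (u u' w : ℝ × ℝ) : ℂ :=
  ∑ v ∈ NSfin m,
    Smat m u v * Smat m u' v * (starRingEnd ℂ) (Smat m w v) / Smat m (1 / 2, 1 / 2) v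

/-- Membership in `𝔽^(m)`: an odd number of the three indices is of Neveu-Schwarz type. -/
def Fmem (m : ℕ) (u u' u'' : ℝ × ℝ) : Prop :=
  (u ∈ NSfin m ∧ u' ∈ NSfin m ∧ u'' ∈ NSfin m) ∨
  (u ∈ NSfin m ∧ u' ∈ Rfin m ∧ u'' ∈ Rfin m) ∨
  (u ∈ Rfin m ∧ u' ∈ NSfin m ∧ u'' ∈ Rfin m) ∨
  (u ∈ Rfin m ∧ u' ∈ Rfin m ∧ u'' ∈ NSfin m)


noncomputable def ee (m : ℕ) (n : ℤ) : ℂ := Complex.exp (Real.pi * Complex.I * n / m)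

lemma ee_add (m : ℕ) (a b : ℤ) : ee m (a + b) = ee m a * ee m b := by
  rw [ee, ee, ee, ← Complex.exp_add]; congr 1; push_cast; ring

lemma ee_zero (m : ℕ) : ee m 0 = 1 := by simp [ee]

lemma ee_ne_zero (m : ℕ) (n : ℤ) : ee m n ≠ 0 := Complex.exp_ne_zero _

lemma ee_neg (m : ℕ) (n : ℤ) : ee m (-n) = (ee m n)⁻¹ := by
  rw [ee, ee, ← Complex.exp_neg]; congr 1; push_cast; ring

lemma ee_mul_nat (m : ℕ) (n : ℤ) (k : ℕ) : ee m (n * k) = (ee m n) ^ k := by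
  rw [ee, ee, ← Complex.exp_nat_mul]; congr 1; push_cast; ring

lemma ee_eq_one_iff (m : ℕ) (hm : 0 < m) (n : ℤ) : ee m n = 1 ↔ (2 * (m:ℤ)) ∣ n := by
  have hm' : (m:ℂ) ≠ 0 := by exact_mod_cast hm.ne'
  have hpiI : (Real.pi:ℂ) * Complex.I ≠ 0 :=
    mul_ne_zero (Complex.ofReal_ne_zero.mpr Real.pi_ne_zero) Complex.I_ne_zero
  rw [ee, Complex.exp_eq_one_iff]
  constructor
  · rintro ⟨k, hk⟩
    refine ⟨k, ?_⟩
    have h3 : (Real.pi:ℂ) * Complex.I * n = (Real.pi:ℂ) * Complex.I * (2*m*k) := by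
      field_simp at hk
      linear_combination ((Real.pi:ℂ) * Complex.I) * hk
    have h4 : (n:ℂ) = ((2*m*k : ℤ) : ℂ) := by
      push_cast
      exact mul_left_cancel₀ hpiI h3
    exact_mod_cast h4
  · rintro ⟨k, rfl⟩
    refine ⟨k, ?_⟩
    push_cast
    field_simp

lemma ee_m (m : ℕ) (hm : 0 < m) : ee m m = -1 := by
  have hm' : (m:ℂ) ≠ 0 := by exact_mod_cast hm.ne'
  rw [ee]
  rw [show Real.pi * Complex.I * (m:ℤ) / m = Real.pi * Complex.I by
    push_cast; field_simp]
  exact Complex.exp_pi_mul_I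

lemma ee_two_pow_m (m : ℕ) (hm : 0 < m) (x : ℤ) : (ee m (2*x)) ^ m = 1 := by
  rw [← ee_mul_nat, (by push_cast; ring : 2*x*(m:ℕ) = (2*(m:ℤ))*x + 0)]
  rw [ee_add]
  rw [(ee_eq_one_iff m hm _).2 ⟨x, rfl⟩, ee_zero, one_mul]

lemma sum_pow_eq (m : ℕ) (hm : 0 < m) (z : ℂ) (hz : z ^ m = 1) :
    ∑ s ∈ range (m - 1), z ^ s = if z = 1 then ((m : ℂ) - 1) else -z⁻¹ := by
  have hz0 : z ≠ 0 := by
    intro h; rw [h, zero_pow hm.ne'] at hz; exact zero_ne_one hz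
  split_ifs with h1
  · subst h1
    simp only [one_pow, Finset.sum_const, Finset.card_range, nsmul_eq_mul, mul_one]
    push_cast [Nat.cast_sub hm]
    ring
  · have hne : z - 1 ≠ 0 := sub_ne_zero.mpr h1
    have hg : (∑ s ∈ range (m - 1), z ^ s) * (z - 1) = z ^ (m - 1) - 1 := geom_sum_mul z (m - 1)
    have h2 : z ^ (m - 1) * z = 1 := by rw [← pow_succ, Nat.sub_add_cancel hm, hz]
    have hzm1 : z ^ (m - 1) = z⁻¹ := eq_inv_of_mul_eq_one_left (by linear_combination h2)
    have key : (∑ s ∈ range (m - 1), z ^ s) * (z - 1) = -z⁻¹ * (z - 1) := by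
      rw [hg, hzm1]; field_simp; ring
    exact mul_right_cancel₀ hne key

lemma count_sum (n : ℕ) : (2 : ℂ) * ∑ s ∈ range n, ((n - s : ℕ) : ℂ) = n * (n + 1) := by
  induction n with
  | zero => simp
  | succ n ih =>
    rw [Finset.sum_range_succ']
    simp only [Nat.succ_sub_succ, Nat.sub_zero]
    push_cast
    ring_nf
    ring_nf at ih
    linear_combination ih

noncomputable def rowS (m : ℕ) (wx wy : ℂ) : ℂ :=
  ∑ s ∈ range (m - 1), wy ^ s * ∑ r ∈ range (m - 1 - s), wx ^ r

lemma pow_m_ne_zero {m : ℕ} (hm : 0 < m) {z : ℂ} (hz : z ^ m = 1) : z ≠ 0 := by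
  intro h; rw [h, zero_pow hm.ne'] at hz; exact zero_ne_one hz

lemma pow_m_pred {m : ℕ} (hm : 0 < m) {z : ℂ} (hz : z ^ m = 1) : z ^ (m - 1) = z⁻¹ :=
  eq_inv_of_mul_eq_one_left (by
    have h2 : z ^ (m - 1) * z = 1 := by rw [← pow_succ, Nat.sub_add_cancel hm, hz]
    linear_combination h2)

lemma rowS_eq (m : ℕ) (hm : 0 < m) (wx wy : ℂ) (hxm : wx ^ m = 1) (hx1 : wx ≠ 1) :
    rowS m wx wy =
      (wx ^ (m - 1) * (∑ s ∈ range (m - 1), (wy * wx⁻¹) ^ s) -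
        ∑ s ∈ range (m - 1), wy ^ s) / (wx - 1) := by
  have hx0 : wx ≠ 0 := pow_m_ne_zero hm hxm
  rw [eq_div_iff (sub_ne_zero.mpr hx1), rowS, Finset.sum_mul, Finset.mul_sum,
    ← Finset.sum_sub_distrib]
  apply Finset.sum_congr rfl
  intro s hs
  have hsle : s ≤ m - 1 := le_of_lt (mem_range.mp hs)
  rw [mul_assoc, geom_sum_mul, mul_pow, inv_pow, pow_sub₀ _ hx0 hsle]
  field_simp

lemma rowS_one_one (m : ℕ) (hm : 0 < m) : rowS m 1 1 = (m : ℂ) * ((m : ℂ) - 1) / 2 := by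
  have h := count_sum (m - 1)
  have hc : ((m - 1 : ℕ) : ℂ) = (m : ℂ) - 1 := by push_cast [Nat.cast_sub hm]; ring
  rw [rowS]
  simp only [one_pow, one_mul, Finset.sum_const, Finset.card_range, nsmul_eq_mul, mul_one]
  rw [hc] at h
  field_simp
  linear_combination h

lemma rowS_val (m : ℕ) (hm : 0 < m) (wx wy : ℂ) (hxm : wx ^ m = 1) (hym : wy ^ m = 1)
    (hx1 : wx ≠ 1) :
    rowS m wx wy = if wy = 1 then -(m : ℂ) / (wx - 1)
      else if wy = wx then (m : ℂ) / (wx * (wx - 1)) else 0 := by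
  have hx0 : wx ≠ 0 := pow_m_ne_zero hm hxm
  have hy0 : wy ≠ 0 := pow_m_ne_zero hm hym
  have hxinv := pow_m_pred hm hxm
  have hdm : (wy * wx⁻¹) ^ m = 1 := by rw [mul_pow, inv_pow, hym, hxm]; simp
  rw [rowS_eq m hm wx wy hxm hx1, sum_pow_eq m hm wy hym, sum_pow_eq m hm _ hdm, hxinv]
  simp only [mul_inv_eq_one₀ hx0]
  have hwx1 : wx - 1 ≠ 0 := sub_ne_zero.mpr hx1
  by_cases h1 : wy = 1
  · subst h1
    have h2 : (1 : ℂ) ≠ wx := fun h => hx1 h.symm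
    rw [if_neg h2, if_pos rfl, if_pos rfl]
    field_simp
    ring
  · by_cases h2 : wy = wx
    · subst h2
      rw [if_pos rfl, if_neg h1, if_neg h1, if_pos rfl]
      field_simp
      ring
    · rw [if_neg h2, if_neg h1, if_neg h1, if_neg h2]
      rw [div_eq_zero_iff]; left; field_simp; ring

def Tri (m : ℕ) : Finset (ℕ × ℕ) :=
  (Finset.range m ×ˢ Finset.range m).filter fun p => p.1 + p.2 + 1 < m

noncomputable def Usum (m : ℕ) (x y : ℤ) : ℂ :=
  ∑ p ∈ Tri m, ee m (2 * (x * p.1 + y * p.2))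

lemma Usum_symm (m : ℕ) (x y : ℤ) : Usum m x y = Usum m y x := by
  rw [Usum, Usum]
  apply Finset.sum_nbij' (fun p => (p.2, p.1)) (fun p => (p.2, p.1))
  · intro a ha
    simp only [Tri, mem_filter, mem_product, mem_range] at ha ⊢
    omega
  · intro a ha
    simp only [Tri, mem_filter, mem_product, mem_range] at ha ⊢
    omega
  · intro a _; rfl
  · intro a _; rfl
  · intro a _
    congr 1
    ring

lemma Usum_row (m : ℕ) (x y : ℤ) :
    Usum m x y = ∑ s ∈ range (m - 1), (ee m (2 * y)) ^ s *
      ∑ r ∈ range (m - 1 - s), (ee m (2 * x)) ^ r := by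
  rw [Usum, Tri, Finset.sum_filter, Finset.sum_product_right]
  have hsub : ∀ s ∈ range m, m - 1 ≤ s →
      (∑ r ∈ range m, if r + s + 1 < m then ee m (2 * (x * r + y * s)) else 0) = 0 := by
    intro s _ hs
    apply Finset.sum_eq_zero
    intro r _
    rw [if_neg (by omega)]
  rw [← Finset.sum_subset (Finset.range_subset_range.mpr (Nat.sub_le m 1)) (by
    intro s hs hns
    exact hsub s hs (by simp only [mem_range] at hns; omega))]
  apply Finset.sum_congr rfl
  intro s hs
  have hslt : s < m - 1 := mem_range.mp hs
  rw [Finset.mul_sum]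
  rw [← Finset.sum_subset (Finset.range_subset_range.mpr (by omega : m - 1 - s ≤ m)) (by
    intro r hr hnr
    rw [if_neg (by simp only [mem_range] at hr hnr; omega)])]
  apply Finset.sum_congr rfl
  intro r hr
  have hrlt : r < m - 1 - s := mem_range.mp hr
  rw [if_pos (by omega)]
  rw [← ee_mul_nat, ← ee_mul_nat, ← ee_add]
  congr 1
  push_cast
  ring

lemma Usum_rowS (m : ℕ) (x y : ℤ) : Usum m x y = rowS m (ee m (2 * x)) (ee m (2 * y)) := by
  rw [Usum_row, rowS]

lemma ee_two_eq_one_iff (m : ℕ) (hm : 0 < m) (z : ℤ) :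
    ee m (2 * z) = 1 ↔ (m : ℤ) ∣ z := by
  rw [ee_eq_one_iff m hm]
  exact mul_dvd_mul_iff_left (two_ne_zero)

lemma ee_two_eq_iff (m : ℕ) (hm : 0 < m) (x y : ℤ) :
    ee m (2 * y) = ee m (2 * x) ↔ (m : ℤ) ∣ (x - y) := by
  have h : ee m (2 * x) = ee m (2 * (x - y)) * ee m (2 * y) := by
    rw [← ee_add]; congr 1; ring
  rw [← ee_two_eq_one_iff m hm (x - y)]
  constructor
  · intro he
    rw [he] at h
    have h2 : (1 : ℂ) * ee m (2 * x) = ee m (2 * (x - y)) * ee m (2 * x) := by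
      rw [one_mul]; exact h
    exact (mul_right_cancel₀ (ee_ne_zero m _) h2).symm
  · intro he
    rw [he, one_mul] at h
    exact h.symm

lemma Usum_val (m : ℕ) (hm : 0 < m) (x y : ℤ) :
    Usum m x y = if (m : ℤ) ∣ x then
        (if (m : ℤ) ∣ y then (m : ℂ) * ((m : ℂ) - 1) / 2 else -(m : ℂ) / (ee m (2 * y) - 1))
      else if (m : ℤ) ∣ y then -(m : ℂ) / (ee m (2 * x) - 1)
      else if (m : ℤ) ∣ (x - y) then (m : ℂ) / (ee m (2 * x) * (ee m (2 * x) - 1))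
      else 0 := by
  have hxm := ee_two_pow_m m hm x
  have hym := ee_two_pow_m m hm y
  by_cases hx : (m : ℤ) ∣ x
  · rw [if_pos hx]
    have hwx : ee m (2 * x) = 1 := (ee_two_eq_one_iff m hm x).mpr hx
    by_cases hy : (m : ℤ) ∣ y
    · rw [if_pos hy]
      have hwy : ee m (2 * y) = 1 := (ee_two_eq_one_iff m hm y).mpr hy
      rw [Usum_rowS, hwx, hwy, rowS_one_one m hm]
    · rw [if_neg hy]
      have hwy : ee m (2 * y) ≠ 1 := fun h => hy ((ee_two_eq_one_iff m hm y).mp h)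
      rw [Usum_symm, Usum_rowS, rowS_val m hm _ _ hym hxm hwy, if_pos hwx]
  · rw [if_neg hx]
    have hwx : ee m (2 * x) ≠ 1 := fun h => hx ((ee_two_eq_one_iff m hm x).mp h)
    rw [Usum_rowS, rowS_val m hm _ _ hxm hym hwx]
    by_cases hy : (m : ℤ) ∣ y
    · have hwy : ee m (2 * y) = 1 := (ee_two_eq_one_iff m hm y).mpr hy
      rw [if_pos hy, if_pos hwy]
    · have hwy : ee m (2 * y) ≠ 1 := fun h => hy ((ee_two_eq_one_iff m hm y).mp h)
      rw [if_neg hy, if_neg hwy]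
      by_cases hxy : (m : ℤ) ∣ (x - y)
      · rw [if_pos hxy, if_pos ((ee_two_eq_iff m hm x y).mpr hxy)]
      · rw [if_neg hxy, if_neg (fun h => hxy ((ee_two_eq_iff m hm x y).mp h))]


lemma alg1 (E M : ℂ) (h0 : E ≠ 0) (hne : E * E - 1 ≠ 0) :
    E * (-M / (E * E - 1)) + E⁻¹ * (-M / ((E * E)⁻¹ - 1)) = 0 := by
  have h2 : (E * E)⁻¹ - 1 = (1 - E * E) / (E * E) := by field_simp
  rw [h2]
  have h4 : (E - E ^ 3) * (E - E ^ 3)⁻¹ = 1 :=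
    mul_inv_cancel₀ (by
      intro h
      have h5 : E * (E * E - 1) = 0 := by linear_combination -h
      rcases mul_eq_zero.mp h5 with h6 | h6
      · exact absurd h6 h0
      · exact absurd h6 hne)
  have ha := mul_inv_cancel₀ (show (-1 + E ^ 2 : ℂ) ≠ 0 by
    intro h; apply hne; linear_combination h)
  have hb := mul_inv_cancel₀ (show (1 - E ^ 2 : ℂ) ≠ 0 by
    intro h; apply hne; linear_combination -h)
  field_simp
  linear_combination (E * M * (1 - E ^ 2)⁻¹) * ha + (E * M * (-1 + E ^ 2)⁻¹) * hb

lemma alg2 (E M : ℂ) (h0 : E ≠ 0) (h1 : E - 1 ≠ 0) :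
    E * (M / (E * (E - 1))) + E⁻¹ * (M / (E⁻¹ * (E⁻¹ - 1))) = -M := by
  have h2 : E⁻¹ - 1 = (1 - E) / E := by field_simp
  rw [h2]
  have h4 : (E - E ^ 2) * (E - E ^ 2)⁻¹ = 1 :=
    mul_inv_cancel₀ (by
      intro h; apply h1
      have h5 : -(E * (E - 1)) = 0 := by linear_combination h
      rcases mul_eq_zero.mp (neg_eq_zero.mp h5) with h6 | h6
      · exact absurd h6 h0
      · exact h6)
  have h1E : 1 - E ≠ 0 := by intro h; apply h1; linear_combination -h
  field_simp
  ring

lemma alg3 (E M : ℂ) (h0 : E ≠ 0) (h1 : E + 1 ≠ 0) :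
    E * (M / (E * -1 * (E * -1 - 1))) + E⁻¹ * (M / ((E * (-1)⁻¹)⁻¹ * ((E * (-1)⁻¹)⁻¹ - 1))) = M := by
  have h2 : (E * (-1)⁻¹)⁻¹ = -E⁻¹ := by
    simp only [inv_neg, inv_one, mul_neg, mul_one, inv_neg]
  rw [h2]
  have h3 : -E⁻¹ - 1 = -((1 + E) / E) := by field_simp; ring
  rw [h3]
  have h4 : (E + E ^ 2) * (E + E ^ 2)⁻¹ = 1 :=
    mul_inv_cancel₀ (by
      intro h; apply h1
      have h5 : E * (E + 1) = 0 := by linear_combination h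
      rcases mul_eq_zero.mp h5 with h6 | h6
      · exact absurd h6 h0
      · exact h6)
  have h1F := mul_inv_cancel₀ (show (-1 - E : ℂ) ≠ 0 by
    intro h; apply h1; linear_combination -h)
  field_simp
  have hb := mul_inv_cancel₀ (show (1 + E : ℂ) ≠ 0 by
    intro h; apply h1; linear_combination h)
  linear_combination (M - M * E * (1 + E)⁻¹) * h1F - (M * E * (-1 - E)⁻¹) * hb

lemma pair_val (m : ℕ) (hm : 0 < m) (x y : ℤ) :
    ee m (x + y) * Usum m x y + ee m (-(x + y)) * Usum m (-y) (-x)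
    = if (m : ℤ) ∣ (x - y) then
        (if (2 * (m : ℤ)) ∣ (x - y) then
          (if (2 * (m : ℤ)) ∣ (x + y) then (m : ℂ) * ((m : ℂ) - 1) else -(m : ℂ))
        else
          (if (2 * (m : ℤ)) ∣ (x + y + m) then -((m : ℂ) * ((m : ℂ) - 1)) else (m : ℂ)))
      else 0 := by
  set E := ee m (x + y) with hEdef
  have hE0 : E ≠ 0 := ee_ne_zero m _
  have hEinv : ee m (-(x + y)) = E⁻¹ := ee_neg m _
  have hct : ee m (2 * x) = E * ee m (x - y) := by
    rw [hEdef, ← ee_add]; congr 1; ring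
  have hct' : ee m (2 * y) = E * (ee m (x - y))⁻¹ := by
    rw [hEdef, ← ee_neg, ← ee_add]; congr 1; ring
  have ht0 : ee m (x - y) ≠ 0 := ee_ne_zero m _
  rw [Usum_val m hm x y, Usum_val m hm (-y) (-x)]
  simp only [show (-y : ℤ) - -x = x - y from by ring, dvd_neg,
    show (2 : ℤ) * -x = -(2 * x) from by ring, show (2 : ℤ) * -y = -(2 * y) from by ring,
    ee_neg, ← hEdef]
  by_cases ht : (m : ℤ) ∣ (x - y)
  · have hxy : (m : ℤ) ∣ x ↔ (m : ℤ) ∣ y := by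
      constructor
      · intro h; have := dvd_sub h ht; simpa using this
      · intro h; have := dvd_add h ht; simpa [add_sub_cancel] using this
    by_cases ht2 : (2 * (m : ℤ)) ∣ (x - y)
    · have het : ee m (x - y) = 1 := (ee_eq_one_iff m hm _).mpr ht2
      by_cases hc2 : (2 * (m : ℤ)) ∣ (x + y)
      · have hE1 : E = 1 := (ee_eq_one_iff m hm _).mpr hc2
        have hx : (m : ℤ) ∣ x := by
          have h2x : (2 * (m : ℤ)) ∣ (2 * x) := by
            have := dvd_add hc2 ht2
            rwa [show x + y + (x - y) = 2 * x from by ring] at this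
          exact (mul_dvd_mul_iff_left (two_ne_zero)).mp h2x
        have hy : (m : ℤ) ∣ y := hxy.mp hx
        simp only [if_pos ht, if_pos ht2, if_pos hc2, if_pos hx, if_pos hy]
        rw [hE1]
        norm_num
      · have hE1 : E ≠ 1 := fun h => hc2 ((ee_eq_one_iff m hm _).mp h)
        have hx : ¬ (m : ℤ) ∣ x := by
          intro hx
          apply hc2
          have h2x : (2 * (m : ℤ)) ∣ (2 * x) := mul_dvd_mul_left 2 hx
          have := dvd_sub h2x ht2
          rwa [show 2 * x - (x - y) = x + y from by ring] at this
        have hy : ¬ (m : ℤ) ∣ y := fun h => hx (hxy.mpr h)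
        simp only [if_pos ht, if_pos ht2, if_neg hc2, if_neg hx, if_neg hy]
        rw [hct, hct', het]
        simp only [mul_one, inv_one]
        exact alg2 E m hE0 (sub_ne_zero.mpr hE1)
    · have h2tm : (2 * (m : ℤ)) ∣ (x - y + m) := by
        obtain ⟨k, hk⟩ := ht
        have hkodd : ¬ (2 : ℤ) ∣ k := by
          intro ⟨l, hl⟩; exact ht2 ⟨l, by rw [hk, hl]; ring⟩
        obtain ⟨l, hl⟩ : (2 : ℤ) ∣ (k + 1) := by omega
        exact ⟨l, by rw [hk, show (m : ℤ) * k + m = m * (k + 1) from by ring, hl]; ring⟩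
      have het : ee m (x - y) = -1 := by
        have h1 : ee m (x - y + m) = 1 := (ee_eq_one_iff m hm _).mpr h2tm
        have h2 : ee m (x - y + m) = ee m (x - y) * ee m m := ee_add m _ _
        rw [ee_m m hm, h1] at h2
        linear_combination h2
      by_cases hcm : (2 * (m : ℤ)) ∣ (x + y + m)
      · have hEm1 : E = -1 := by
          have h1 : ee m (x + y + m) = 1 := (ee_eq_one_iff m hm _).mpr hcm
          have h2 : ee m (x + y + m) = E * ee m m := ee_add m _ _
          rw [ee_m m hm, h1] at h2
          linear_combination h2
        have hx : (m : ℤ) ∣ x := by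
          have h2x : (2 * (m : ℤ)) ∣ (2 * x) := by
            have h3 := dvd_add hcm h2tm
            rw [show x + y + m + (x - y + m) = 2 * x + 2 * m from by ring] at h3
            have h2m : (2 * (m : ℤ)) ∣ (2 * m) := ⟨1, by ring⟩
            have h4 := dvd_sub h3 h2m
            rwa [add_sub_cancel_right] at h4
          exact (mul_dvd_mul_iff_left (two_ne_zero)).mp h2x
        have hy : (m : ℤ) ∣ y := hxy.mp hx
        simp only [if_pos ht, if_neg ht2, if_pos hcm, if_pos hx, if_pos hy]
        rw [hEm1]
        norm_num
        ring_nf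
      · have hEm1 : E ≠ -1 := by
          intro h
          apply hcm
          have h1 : ee m (x + y + m) = 1 := by
            rw [ee_add m _ _, ee_m m hm, ← hEdef, h]; ring
          exact (ee_eq_one_iff m hm _).mp h1
        have hx : ¬ (m : ℤ) ∣ x := by
          intro hx
          apply hcm
          have h2x : (2 * (m : ℤ)) ∣ (2 * x) := mul_dvd_mul_left 2 hx
          have h2m : (2 * (m : ℤ)) ∣ (2 * m) := ⟨1, by ring⟩
          have h3 := dvd_sub (dvd_add h2x h2m) h2tm
          rwa [show 2 * x + 2 * m - (x - y + m) = x + y + m from by ring] at h3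
        have hy : ¬ (m : ℤ) ∣ y := fun h => hx (hxy.mpr h)
        simp only [if_pos ht, if_neg ht2, if_neg hcm, if_neg hx, if_neg hy]
        rw [hct, hct', het]
        exact alg3 E m hE0 (by intro h; exact hEm1 (by linear_combination h))
  · have hnb : ¬ ((m : ℤ) ∣ x ∧ (m : ℤ) ∣ y) := by
      rintro ⟨hx, hy⟩; exact ht (dvd_sub hx hy)
    by_cases hx : (m : ℤ) ∣ x
    · have hy : ¬ (m : ℤ) ∣ y := fun h => hnb ⟨hx, h⟩
      have hwx : ee m (2 * x) = 1 := (ee_two_eq_one_iff m hm x).mpr hx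
      have hF : ee m (x - y) = E⁻¹ := by
        have h1 : E * ee m (x - y) = 1 := by rw [← hct, hwx]
        exact eq_inv_of_mul_eq_one_left (by linear_combination h1)
      have hw : ee m (2 * y) = E * E := by rw [hct', hF, inv_inv]
      have hw1 : ee m (2 * y) ≠ 1 := fun h => hy ((ee_two_eq_one_iff m hm y).mp h)
      have hwne : E * E - 1 ≠ 0 := by rw [← hw]; exact sub_ne_zero.mpr hw1
      have hwinvne : (E * E)⁻¹ - 1 ≠ 0 := by
        rw [sub_ne_zero]; intro h
        exact (sub_ne_zero.mpr hw1) (by rw [hw, ← inv_inv (E * E), h, inv_one, sub_self])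
      simp only [if_neg ht, if_pos hx, if_neg hy]
      rw [hw]
      exact alg1 E m hE0 hwne
    · by_cases hy : (m : ℤ) ∣ y
      · have hwy : ee m (2 * y) = 1 := (ee_two_eq_one_iff m hm y).mpr hy
        have hF : E = ee m (x - y) := (mul_inv_eq_one₀ ht0).mp (by rw [← hct', hwy])
        have hw : ee m (2 * x) = E * E := by rw [hct, ← hF]
        have hw1 : ee m (2 * x) ≠ 1 := fun h => hx ((ee_two_eq_one_iff m hm x).mp h)
        have hwne : E * E - 1 ≠ 0 := by rw [← hw]; exact sub_ne_zero.mpr hw1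
        have hwinvne : (E * E)⁻¹ - 1 ≠ 0 := by
          rw [sub_ne_zero]; intro h
          exact (sub_ne_zero.mpr hw1) (by rw [hw, ← inv_inv (E * E), h, inv_one, sub_self])
        simp only [if_neg ht, if_neg hx, if_pos hy]
        rw [hw]
        exact alg1 E m hE0 hwne
      · simp only [if_neg ht, if_neg hx, if_neg hy]
        ring

lemma int_small_zero {d z : ℤ} (hd : 0 < d) (hdvd : d ∣ z) (hlt : |z| < d) : z = 0 := by
  obtain ⟨k, rfl⟩ := hdvd
  rcases eq_or_ne k 0 with rfl | hk
  · ring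
  · exfalso
    have h1 : 1 ≤ |k| := Int.one_le_abs (by omega)
    have h2 : |d * k| = |d| * |k| := abs_mul d k
    have h3 : |d| = d := abs_of_pos hd
    nlinarith [abs_nonneg (d * k)]

lemma key_sum (m : ℕ) (hm : 0 < m) (A B P Q : ℤ)
    (hA1 : 1 ≤ A) (hA2 : A ≤ (m : ℤ) - 1) (hP1 : 1 ≤ P) (hP2 : P ≤ (m : ℤ) - 1)
    (hpar : Even (A + B + P + Q)) :
    ∑ p ∈ Tri m, (-(1 / (m : ℂ) ^ 2) * ee m (((p.1 : ℤ) - (p.2 : ℤ)) * (B + Q)) *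
        (ee m (((p.1 : ℤ) + (p.2 : ℤ) + 1) * (A + P)) +
          ee m (-(((p.1 : ℤ) + (p.2 : ℤ) + 1) * (A + P))) -
          ee m (((p.1 : ℤ) + (p.2 : ℤ) + 1) * (A - P)) -
          ee m (-(((p.1 : ℤ) + (p.2 : ℤ) + 1) * (A - P)))))
    = if ((2 * (m : ℤ)) ∣ (B + Q) ∧ A = P) ∨ ((2 * (m : ℤ)) ∣ (B + Q + m) ∧ A + P = m)
      then 1 else 0 := by
  have hmz : 1 ≤ (m : ℤ) := by exact_mod_cast hm
  have hm2 : 2 ≤ (m : ℤ) := by omega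
  have hmc : (m : ℂ) ≠ 0 := by exact_mod_cast (by omega : (m : ℤ) ≠ 0)
  obtain ⟨r, hr⟩ := hpar
  obtain ⟨x₁, hx₁⟩ : ∃ x, A + P + (B + Q) = 2 * x := ⟨r, by omega⟩
  obtain ⟨y₁, hy₁⟩ : ∃ y, A + P - (B + Q) = 2 * y := ⟨x₁ - (B + Q), by omega⟩
  obtain ⟨x₂, hx₂⟩ : ∃ x, A - P + (B + Q) = 2 * x := ⟨x₁ - P, by omega⟩
  obtain ⟨y₂, hy₂⟩ : ∃ y, A - P - (B + Q) = 2 * y := ⟨y₁ - P, by omega⟩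
  have hs₁ : x₁ + y₁ = A + P := by omega
  have hd₁ : x₁ - y₁ = B + Q := by omega
  have hs₂ : x₂ + y₂ = A - P := by omega
  have hd₂ : x₂ - y₂ = B + Q := by omega
  have hterm : ∀ p ∈ Tri m,
      (-(1 / (m : ℂ) ^ 2) * ee m (((p.1 : ℤ) - (p.2 : ℤ)) * (B + Q)) *
        (ee m (((p.1 : ℤ) + (p.2 : ℤ) + 1) * (A + P)) +
          ee m (-(((p.1 : ℤ) + (p.2 : ℤ) + 1) * (A + P))) -
          ee m (((p.1 : ℤ) + (p.2 : ℤ) + 1) * (A - P)) -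
          ee m (-(((p.1 : ℤ) + (p.2 : ℤ) + 1) * (A - P)))))
      = -(1 / (m : ℂ) ^ 2) *
          ((ee m (x₁ + y₁) * ee m (2 * (x₁ * (p.1 : ℤ) + y₁ * (p.2 : ℤ))) +
            ee m (-(x₁ + y₁)) * ee m (2 * (-y₁ * (p.1 : ℤ) + -x₁ * (p.2 : ℤ)))) -
           (ee m (x₂ + y₂) * ee m (2 * (x₂ * (p.1 : ℤ) + y₂ * (p.2 : ℤ))) +
            ee m (-(x₂ + y₂)) * ee m (2 * (-y₂ * (p.1 : ℤ) + -x₂ * (p.2 : ℤ))))) := by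
    intro p _
    have e1 : ee m (x₁ + y₁) * ee m (2 * (x₁ * (p.1 : ℤ) + y₁ * (p.2 : ℤ)))
        = ee m (((p.1 : ℤ) - (p.2 : ℤ)) * (B + Q)) *
          ee m (((p.1 : ℤ) + (p.2 : ℤ) + 1) * (A + P)) := by
      rw [← ee_add, ← ee_add]; congr 1
      linear_combination -(p.1 : ℤ) * hx₁ - (p.2 : ℤ) * hy₁ + hs₁
    have e2 : ee m (-(x₁ + y₁)) * ee m (2 * (-y₁ * (p.1 : ℤ) + -x₁ * (p.2 : ℤ)))
        = ee m (((p.1 : ℤ) - (p.2 : ℤ)) * (B + Q)) *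
          ee m (-(((p.1 : ℤ) + (p.2 : ℤ) + 1) * (A + P))) := by
      rw [← ee_add, ← ee_add]; congr 1
      linear_combination (p.2 : ℤ) * hx₁ + (p.1 : ℤ) * hy₁ - hs₁
    have e3 : ee m (x₂ + y₂) * ee m (2 * (x₂ * (p.1 : ℤ) + y₂ * (p.2 : ℤ)))
        = ee m (((p.1 : ℤ) - (p.2 : ℤ)) * (B + Q)) *
          ee m (((p.1 : ℤ) + (p.2 : ℤ) + 1) * (A - P)) := by
      rw [← ee_add, ← ee_add]; congr 1
      linear_combination -(p.1 : ℤ) * hx₂ - (p.2 : ℤ) * hy₂ + hs₂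
    have e4 : ee m (-(x₂ + y₂)) * ee m (2 * (-y₂ * (p.1 : ℤ) + -x₂ * (p.2 : ℤ)))
        = ee m (((p.1 : ℤ) - (p.2 : ℤ)) * (B + Q)) *
          ee m (-(((p.1 : ℤ) + (p.2 : ℤ) + 1) * (A - P))) := by
      rw [← ee_add, ← ee_add]; congr 1
      linear_combination (p.2 : ℤ) * hx₂ + (p.1 : ℤ) * hy₂ - hs₂
    rw [e1, e2, e3, e4]
    ring
  rw [Finset.sum_congr rfl hterm, ← Finset.mul_sum]
  have hsplit : ∑ p ∈ Tri m,
      ((ee m (x₁ + y₁) * ee m (2 * (x₁ * (p.1 : ℤ) + y₁ * (p.2 : ℤ))) +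
        ee m (-(x₁ + y₁)) * ee m (2 * (-y₁ * (p.1 : ℤ) + -x₁ * (p.2 : ℤ)))) -
       (ee m (x₂ + y₂) * ee m (2 * (x₂ * (p.1 : ℤ) + y₂ * (p.2 : ℤ))) +
        ee m (-(x₂ + y₂)) * ee m (2 * (-y₂ * (p.1 : ℤ) + -x₂ * (p.2 : ℤ)))))
      = (ee m (x₁ + y₁) * Usum m x₁ y₁ + ee m (-(x₁ + y₁)) * Usum m (-y₁) (-x₁)) -
        (ee m (x₂ + y₂) * Usum m x₂ y₂ + ee m (-(x₂ + y₂)) * Usum m (-y₂) (-x₂)) := by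
    rw [Finset.sum_sub_distrib, Finset.sum_add_distrib, Finset.sum_add_distrib]
    simp only [Usum, ← Finset.mul_sum]
  rw [hsplit, pair_val m hm x₁ y₁, pair_val m hm x₂ y₂]
  rw [hs₁, hd₁, hs₂, hd₂]
  -- arithmetic facts about the divisibility conditions
  have hc₁ : ¬ (2 * (m : ℤ)) ∣ (A + P) := by
    intro h
    have := int_small_zero (by omega) h (by rw [abs_of_pos (by omega)]; omega)
    omega
  have hc₂iff : (2 * (m : ℤ)) ∣ (A - P) ↔ A = P := by
    constructor
    · intro h
      have := int_small_zero (by omega : (0:ℤ) < 2 * m) h (by rw [abs_lt]; omega)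
      omega
    · intro h; rw [h]; simp
  have hcmiff : (2 * (m : ℤ)) ∣ (A + P + m) ↔ A + P = m := by
    constructor
    · intro h
      have h2 : (2 * (m : ℤ)) ∣ (A + P + m - 2 * m) := dvd_sub h ⟨1, by ring⟩
      have := int_small_zero (by omega : (0:ℤ) < 2 * m) h2 (by rw [abs_lt]; omega)
      omega
    · intro h; exact ⟨1, by omega⟩
  have hc₂m : ¬ (2 * (m : ℤ)) ∣ (A - P + m) := by
    intro h
    have := int_small_zero (by omega : (0:ℤ) < 2 * m) h (by rw [abs_lt]; omega)
    omega
  by_cases hmt : (m : ℤ) ∣ (B + Q)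
  · by_cases h2t : (2 * (m : ℤ)) ∣ (B + Q)
    · have hntm : ¬ (2 * (m : ℤ)) ∣ (B + Q + m) := by
        intro h
        have h2 : (2 * (m : ℤ)) ∣ (m : ℤ) := by
          have := dvd_sub h h2t
          simpa using this
        have := Int.le_of_dvd (by omega) h2
        omega
      rw [if_pos hmt, if_pos h2t, if_neg hc₁, if_pos hmt, if_pos h2t]
      by_cases hAP : A = P
      · rw [if_pos (hc₂iff.mpr hAP), if_pos (Or.inl ⟨h2t, hAP⟩)]
        field_simp
        ring
      · rw [if_neg (fun h => hAP (hc₂iff.mp h)),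
          if_neg (by rintro (⟨_, h⟩ | ⟨h, _⟩); exact hAP h; exact hntm h)]
        ring
    · have h2tm : (2 * (m : ℤ)) ∣ (B + Q + m) := by
        obtain ⟨k, hk⟩ := hmt
        have hkodd : ¬ (2 : ℤ) ∣ k := by
          intro ⟨l, hl⟩; exact h2t ⟨l, by rw [hk, hl]; ring⟩
        obtain ⟨l, hl⟩ : (2 : ℤ) ∣ (k + 1) := by omega
        exact ⟨l, by rw [hk, show (m : ℤ) * k + m = m * (k + 1) from by ring, hl]; ring⟩
      rw [if_pos hmt, if_neg h2t, if_pos hmt, if_neg h2t, if_neg hc₂m]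
      by_cases hAPm : A + P = m
      · rw [if_pos (hcmiff.mpr hAPm), if_pos (Or.inr ⟨h2tm, hAPm⟩)]
        field_simp
        ring
      · rw [if_neg (fun h => hAPm (hcmiff.mp h)),
          if_neg (by rintro (⟨h, _⟩ | ⟨_, h⟩); exact h2t h; exact hAPm h)]
        ring
  · have hmd : (m : ℤ) ∣ (2 * (m : ℤ)) := ⟨2, by ring⟩
    rw [if_neg hmt, if_neg hmt,
      if_neg (by
        rintro (⟨h, _⟩ | ⟨h, _⟩)
        · exact hmt (dvd_trans hmd h)
        · exact hmt (by
            have := dvd_trans hmd h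
            have h2 := dvd_sub this (dvd_refl (m : ℤ))
            simpa using h2))]
    ring

lemma smat_factor (m : ℕ) (u : ℝ × ℝ) (w : ℝ × ℝ) (A B a b : ℤ)
    (huA : u.1 + u.2 = (A : ℝ)) (huB : u.1 - u.2 = (B : ℝ))
    (hwa : w.1 + w.2 = (a : ℝ)) (hwb : w.1 - w.2 = (b : ℝ)) :
    Smat m u w = (2 / (m : ℂ)) * ee m (B * b) *
      ((ee m (-(A * a)) - ee m (A * a)) * Complex.I / 2) := by
  rw [Smat, Complex.sin]
  have h0 : Real.pi * Complex.I * (((u.1 - u.2) * (w.1 - w.2) / m : ℝ) : ℂ)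
      = Real.pi * Complex.I * (((B * b : ℤ) : ℝ) : ℂ) / m := by
    rw [huB, hwb]; push_cast; ring
  have h1 : -(((Real.pi * (u.1 + u.2) * (w.1 + w.2) / m : ℝ)) : ℂ) * Complex.I
      = Real.pi * Complex.I * (((-(A * a) : ℤ) : ℝ) : ℂ) / m := by
    rw [huA, hwa]; push_cast; ring
  have h2 : (((Real.pi * (u.1 + u.2) * (w.1 + w.2) / m : ℝ)) : ℂ) * Complex.I
      = Real.pi * Complex.I * ((((A * a) : ℤ) : ℝ) : ℂ) / m := by
    rw [huA, hwa]; push_cast; ring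
  rw [h0, h1, h2, ee, ee, ee]
  norm_cast

lemma smat_prod (m : ℕ) (u v : ℝ × ℝ) (A B P Q : ℤ)
    (huA : u.1 + u.2 = (A : ℝ)) (huB : u.1 - u.2 = (B : ℝ))
    (hvP : v.1 + v.2 = (P : ℝ)) (hvQ : v.1 - v.2 = (Q : ℝ)) (p : ℕ × ℕ) :
    Smat m u (((p.1 : ℝ) + 1 / 2, (p.2 : ℝ) + 1 / 2)) *
      Smat m (((p.1 : ℝ) + 1 / 2, (p.2 : ℝ) + 1 / 2)) v
    = -(1 / (m : ℂ) ^ 2) * ee m (((p.1 : ℤ) - (p.2 : ℤ)) * (B + Q)) *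
        (ee m (((p.1 : ℤ) + (p.2 : ℤ) + 1) * (A + P)) +
          ee m (-(((p.1 : ℤ) + (p.2 : ℤ) + 1) * (A + P))) -
          ee m (((p.1 : ℤ) + (p.2 : ℤ) + 1) * (A - P)) -
          ee m (-(((p.1 : ℤ) + (p.2 : ℤ) + 1) * (A - P)))) := by
  set a : ℤ := (p.1 : ℤ) + (p.2 : ℤ) + 1 with ha
  set b : ℤ := (p.1 : ℤ) - (p.2 : ℤ) with hb
  have hwa : (((p.1 : ℝ) + 1 / 2, (p.2 : ℝ) + 1 / 2) : ℝ × ℝ).1 +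
      (((p.1 : ℝ) + 1 / 2, (p.2 : ℝ) + 1 / 2) : ℝ × ℝ).2 = (a : ℝ) := by
    simp only [ha]; push_cast; ring
  have hwb : (((p.1 : ℝ) + 1 / 2, (p.2 : ℝ) + 1 / 2) : ℝ × ℝ).1 -
      (((p.1 : ℝ) + 1 / 2, (p.2 : ℝ) + 1 / 2) : ℝ × ℝ).2 = (b : ℝ) := by
    simp only [hb]; push_cast; ring
  rw [smat_factor m u _ A B a b huA huB hwa hwb,
    smat_factor m _ v a b P Q hwa hwb hvP hvQ]
  have q1 : ee m (-(A * a)) * ee m (-(a * P)) = ee m (-(a * (A + P))) := by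
    rw [← ee_add]; congr 1; ring
  have q2 : ee m (-(A * a)) * ee m (a * P) = ee m (-(a * (A - P))) := by
    rw [← ee_add]; congr 1; ring
  have q3 : ee m (A * a) * ee m (-(a * P)) = ee m (a * (A - P)) := by
    rw [← ee_add]; congr 1; ring
  have q4 : ee m (A * a) * ee m (a * P) = ee m (a * (A + P)) := by
    rw [← ee_add]; congr 1; ring
  have q5 : ee m (B * b) * ee m (b * Q) = ee m (b * (B + Q)) := by
    rw [← ee_add]; congr 1; ring
  have hIden : Complex.I * Complex.I = -1 := Complex.I_mul_I
  linear_combination (ee m (B * b) * ee m (b * Q) *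
      (ee m (-(A * a)) - ee m (A * a)) * (ee m (-(a * P)) - ee m (a * P)) / (m : ℂ) ^ 2) * hIden
    - ((ee m (-(A * a)) - ee m (A * a)) * (ee m (-(a * P)) - ee m (a * P)) / (m : ℂ) ^ 2) * q5
    + (ee m (b * (B + Q)) / (m : ℂ) ^ 2) * (q2 + q3 - q1 - q4)

lemma mem_NSfin {m : ℕ} {u : ℝ × ℝ} (hu : u ∈ NSfin m) :
    ∃ j k : ℕ, j + k + 1 < m ∧ u = ((j : ℝ) + 1 / 2, (k : ℝ) + 1 / 2) := by
  rw [NSfin, Finset.mem_image] at hu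
  obtain ⟨p, hp, he⟩ := hu
  rw [Finset.mem_filter] at hp
  exact ⟨p.1, p.2, hp.2, he.symm⟩

lemma mem_Rfin {m : ℕ} {u : ℝ × ℝ} (hu : u ∈ Rfin m) :
    ∃ j k : ℕ, 1 ≤ j ∧ j + k < m ∧ k < m ∧ u = ((j : ℝ), (k : ℝ)) := by
  rw [Rfin, Finset.mem_image] at hu
  obtain ⟨p, hp, he⟩ := hu
  rw [Finset.mem_filter, Finset.mem_product, Finset.mem_range, Finset.mem_range] at hp
  exact ⟨p.1, p.2, hp.2.1, hp.2.2, hp.1.2, he.symm⟩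

theorem Smat_unitarity (m : ℕ) (hm : 0 < m) (u v : ℝ × ℝ)
    (h : (u ∈ NSfin m ∧ v ∈ NSfin m) ∨ (u ∈ Rfin m ∧ v ∈ Rfin m)) :
    ∑ w ∈ NSfin m, Smat m u w * Smat m w v
      = if u = conjA m v then 1 else 0 := by
  have hinj : ∀ x ∈ Tri m, ∀ y ∈ Tri m,
      (fun p : ℕ × ℕ => ((p.1 : ℝ) + 1 / 2, (p.2 : ℝ) + 1 / 2)) x =
      (fun p : ℕ × ℕ => ((p.1 : ℝ) + 1 / 2, (p.2 : ℝ) + 1 / 2)) y → x = y := by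
    intro x _ y _ hxy
    simp only [Prod.mk.injEq] at hxy
    obtain ⟨h1, h2⟩ := hxy
    have e1 : (x.1 : ℝ) = y.1 := by linarith
    have e2 : (x.2 : ℝ) = y.2 := by linarith
    exact Prod.ext_iff.mpr ⟨Nat.cast_inj.mp e1, Nat.cast_inj.mp e2⟩
  have hsum : ∀ (A B P Q : ℤ), u.1 + u.2 = (A : ℝ) → u.1 - u.2 = (B : ℝ) →
      v.1 + v.2 = (P : ℝ) → v.1 - v.2 = (Q : ℝ) → 1 ≤ A → A ≤ (m : ℤ) - 1 →
      1 ≤ P → P ≤ (m : ℤ) - 1 → Even (A + B + P + Q) →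
      ∑ w ∈ NSfin m, Smat m u w * Smat m w v
        = if ((2 * (m : ℤ)) ∣ (B + Q) ∧ A = P) ∨
            ((2 * (m : ℤ)) ∣ (B + Q + m) ∧ A + P = m) then 1 else 0 := by
    intro A B P Q h1 h2 h3 h4 b1 b2 b3 b4 hp
    rw [show NSfin m = (Tri m).image
        (fun p : ℕ × ℕ => ((p.1 : ℝ) + 1 / 2, (p.2 : ℝ) + 1 / 2)) from rfl]
    rw [Finset.sum_image hinj]
    rw [Finset.sum_congr rfl (fun p _ => smat_prod m u v A B P Q h1 h2 h3 h4 p)]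
    exact key_sum m hm A B P Q b1 b2 b3 b4 hp
  have hmz : 1 ≤ (m : ℤ) := by exact_mod_cast hm
  rcases h with ⟨hu, hv⟩ | ⟨hu, hv⟩
  · obtain ⟨pj, pk, hjk, rfl⟩ := mem_NSfin hu
    obtain ⟨qj, qk, hjk', rfl⟩ := mem_NSfin hv
    rw [hsum ((pj : ℤ) + pk + 1) ((pj : ℤ) - pk) ((qj : ℤ) + qk + 1) ((qj : ℤ) - qk)
      (by push_cast; ring) (by push_cast; ring) (by push_cast; ring) (by push_cast; ring)
      (by omega) (by omega) (by omega) (by omega)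
      ⟨(pj : ℤ) + qj + 1, by ring⟩]
    have hconj : conjA m ((qj : ℝ) + 1 / 2, (qk : ℝ) + 1 / 2)
        = ((qk : ℝ) + 1 / 2, (qj : ℝ) + 1 / 2) := by
      rw [conjA, if_neg (show ¬((qk : ℝ) + 1 / 2 = 0) by positivity)]
    rw [hconj]
    refine if_congr ?_ rfl rfl
    constructor
    · rintro (⟨hdvd, hAP⟩ | ⟨hdvd, hAPm⟩)
      · have h0 : (pj : ℤ) - pk + ((qj : ℤ) - qk) = 0 :=
          int_small_zero (by omega) hdvd (by rw [abs_lt]; constructor <;> omega)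
        have hjq : pj = qk ∧ pk = qj := by omega
        simp only [Prod.mk.injEq]
        exact ⟨by rw [hjq.1], by rw [hjq.2]⟩
      · exfalso
        have h0 : (pj : ℤ) - pk + ((qj : ℤ) - qk) + m = 0 :=
          int_small_zero (by omega) hdvd (by rw [abs_lt]; constructor <;> omega)
        omega
    · intro heq
      simp only [Prod.mk.injEq] at heq
      obtain ⟨he1, he2⟩ := heq
      have e1 : (pj : ℝ) = qk := by linarith
      have e2 : (pk : ℝ) = qj := by linarith
      have hq1 : pj = qk := Nat.cast_inj.mp e1
      have hq2 : pk = qj := Nat.cast_inj.mp e2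
      have hz : (pj : ℤ) - pk + ((qj : ℤ) - qk) = 0 := by omega
      refine Or.inl ⟨?_, by omega⟩
      rw [hz]
      exact dvd_zero _
  · obtain ⟨pj, pk, hp1, hjk, hpk, rfl⟩ := mem_Rfin hu
    obtain ⟨qj, qk, hq1, hjk', hqk, rfl⟩ := mem_Rfin hv
    rw [hsum ((pj : ℤ) + pk) ((pj : ℤ) - pk) ((qj : ℤ) + qk) ((qj : ℤ) - qk)
      (by push_cast; ring) (by push_cast; ring) (by push_cast; ring) (by push_cast; ring)
      (by omega) (by omega) (by omega) (by omega)
      ⟨(pj : ℤ) + qj, by ring⟩]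
    by_cases hq0 : qk = 0
    · subst hq0
      have hconj : conjA m ((qj : ℝ), ((0 : ℕ) : ℝ)) = ((m : ℝ) - qj, 0) := by
        rw [conjA, if_pos (show (((qj : ℝ), ((0 : ℕ) : ℝ)) : ℝ × ℝ).2 = 0 by norm_num)]
      rw [hconj]
      refine if_congr ?_ rfl rfl
      constructor
      · rintro (⟨hdvd, hAP⟩ | ⟨hdvd, hAPm⟩)
        · exfalso
          have h0 : (pj : ℤ) - pk + ((qj : ℤ) - 0) = 0 :=
            int_small_zero (by omega) hdvd (by rw [abs_lt]; constructor <;> omega)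
          omega
        · have hdvd2 : (2 * (m : ℤ)) ∣ ((pj : ℤ) - pk + ((qj : ℤ) - 0) + m - 2 * m) :=
            dvd_sub hdvd ⟨1, by ring⟩
          have h0 : (pj : ℤ) - pk + ((qj : ℤ) - 0) + m - 2 * m = 0 :=
            int_small_zero (by omega) hdvd2 (by rw [abs_lt]; constructor <;> omega)
          have hj2 : (pj : ℤ) = (m : ℤ) - qj := by omega
          have hk2 : pk = 0 := by omega
          simp only [Prod.mk.injEq]
          constructor
          · have h3 : ((pj : ℤ) : ℝ) = (((m : ℤ) - qj : ℤ) : ℝ) := by exact_mod_cast hj2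
            push_cast at h3 ⊢
            linarith
          · rw [hk2]
            norm_num
      · intro heq
        simp only [Prod.mk.injEq] at heq
        obtain ⟨he1, he2⟩ := heq
        have hk0 : pk = 0 := by exact_mod_cast he2
        have hj : (pj : ℤ) = (m : ℤ) - qj := by
          have e3 : ((pj : ℤ) : ℝ) = (((m : ℤ) - qj : ℤ) : ℝ) := by push_cast; linarith
          exact_mod_cast e3
        refine Or.inr ⟨⟨1, by omega⟩, by omega⟩
    · have hconj : conjA m ((qj : ℝ), (qk : ℝ)) = ((qk : ℝ), (qj : ℝ)) := by
        rw [conjA, if_neg (show ¬((qk : ℝ) = 0) by exact_mod_cast hq0)]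
      rw [hconj]
      refine if_congr ?_ rfl rfl
      constructor
      · rintro (⟨hdvd, hAP⟩ | ⟨hdvd, hAPm⟩)
        · have h0 : (pj : ℤ) - pk + ((qj : ℤ) - qk) = 0 :=
            int_small_zero (by omega) hdvd (by rw [abs_lt]; constructor <;> omega)
          have hjq : pj = qk ∧ pk = qj := by omega
          simp only [Prod.mk.injEq]
          exact ⟨by rw [hjq.1], by rw [hjq.2]⟩
        · exfalso
          have hdvd2 : (2 * (m : ℤ)) ∣ ((pj : ℤ) - pk + ((qj : ℤ) - qk) + m - 2 * m) :=
            dvd_sub hdvd ⟨1, by ring⟩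
          have h0 : (pj : ℤ) - pk + ((qj : ℤ) - qk) + m - 2 * m = 0 :=
            int_small_zero (by omega) hdvd2 (by rw [abs_lt]; constructor <;> omega)
          omega
      · intro heq
        simp only [Prod.mk.injEq] at heq
        obtain ⟨he1, he2⟩ := heq
        have hp' : pj = qk := by exact_mod_cast he1
        have hk' : pk = qj := by exact_mod_cast he2
        have hz : (pj : ℤ) - pk + ((qj : ℤ) - qk) = 0 := by omega
        refine Or.inl ⟨?_, by omega⟩
        rw [hz]
        exact dvd_zero _
end

section
/- If e^{ia} = 1 and e^{ib} ≠ 1, then J(a,b) = (1-m) · e^{ibm}/(1-e^{ib}) + (e^{ib} - e^{ibm})/(1-e^{ib})². -/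
open Complex Finset

theorem Jsum_one_ne_one (m : ℕ) (hm : 0 < m) (a b : ℂ)
    (ha : Complex.exp (Complex.I * a) = 1) (hb : Complex.exp (Complex.I * b) ≠ 1) :
    Jsum m a b
      = (1 - m) * Complex.exp (Complex.I * b * m) / (1 - Complex.exp (Complex.I * b)) +
        (Complex.exp (Complex.I * b) - Complex.exp (Complex.I * b * m)) /
          (1 - Complex.exp (Complex.I * b)) ^ 2 := by
  set x := Complex.exp (Complex.I * b) with hxdef
  have hx1 : 1 - x ≠ 0 := sub_ne_zero.mpr (Ne.symm hb)
  have hcard : ∀ k : ℤ, 0 < k →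
      ((Finset.Ioo (-k) k).filter fun j => Odd (j + k)).card = k.toNat := by
    intro k hk
    have hset : ((Finset.Ioo (-k) k).filter fun j => Odd (j + k))
        = (Finset.range k.toNat).image (fun i : ℕ => k - 1 - 2 * (i : ℤ)) := by
      ext j
      simp only [Finset.mem_filter, Finset.mem_Ioo, Finset.mem_image, Finset.mem_range,
        Int.odd_iff]
      constructor
      · rintro ⟨⟨h1, h2⟩, h3⟩
        refine ⟨(k - 1 - j).toNat / 2, by omega, by omega⟩
      · rintro ⟨i, hi, rfl⟩
        omega
    rw [hset, Finset.card_image_of_injective _ (fun a b h => by omega), Finset.card_range]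
  have hpow : ∀ n : ℕ, Complex.exp (Complex.I * b * n) = x ^ n := by
    intro n
    rw [mul_comm, Complex.exp_nat_mul]
  have hJ : Jsum m a b = ∑ k ∈ Finset.Ioo (0:ℤ) (m:ℤ), (k.toNat : ℂ) * x ^ k.toNat := by
    unfold Jsum
    apply Finset.sum_congr rfl
    intro k hk
    simp only [Finset.mem_Ioo] at hk
    have hexp : ∀ j ∈ (Finset.Ioo (-k) k).filter fun j => Odd (j + k),
        Complex.exp (Complex.I * a * j) * Complex.exp (Complex.I * b * k)
          = Complex.exp (Complex.I * b * k) := by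
      intro j _
      rw [show Complex.I * a * (j:ℂ) = (j:ℂ) * (Complex.I * a) by ring,
        Complex.exp_int_mul, ha, one_zpow, one_mul]
    rw [Finset.sum_congr rfl hexp, Finset.sum_const, hcard k hk.1, nsmul_eq_mul]
    congr 1
    have h1 : ((k : ℂ)) = ((k.toNat : ℕ) : ℂ) := by norm_cast; omega
    rw [h1, hpow]
  have key : ∀ n : ℕ,
      (∑ k ∈ Finset.Ioo (0:ℤ) (n:ℤ), (k.toNat : ℂ) * x ^ k.toNat) * (1 - x) ^ 2
        = (1 - (n:ℂ)) * x ^ n * (1 - x) + (x - x ^ n) := by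
    intro n
    induction n with
    | zero => simp
    | succ n ih =>
      rcases Nat.eq_zero_or_pos n with h | h
      · subst h
        have : Finset.Ioo (0:ℤ) ((0+1:ℕ):ℤ) = ∅ := by decide
        rw [this]
        simp
      · have hins : Finset.Ioo (0:ℤ) ((n+1:ℕ):ℤ)
            = insert (n:ℤ) (Finset.Ioo (0:ℤ) (n:ℤ)) := by
          ext j
          simp only [Finset.mem_Ioo, Finset.mem_insert]
          omega
        rw [hins, Finset.sum_insert (by simp)]
        have ht2 : ((n:ℤ)).toNat = n := by omega
        rw [ht2, add_mul, ih]
        push_cast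
        ring
  rw [hJ]
  have h2 : (1 - x) ^ 2 ≠ 0 := pow_ne_zero _ hx1
  have hkey := key m
  rw [hpow m]
  field_simp
  linear_combination hkey
end

section
/- If e^{ia} = -1 and e^{ib} ≠ -1, then J(a,b) = (-1)^m (m-1) · e^{ibm}/(1+e^{ib}) + (e^{ib} + (-1)^m e^{ibm})/(1+e^{ib})². -/
open Complex Finset

lemma aux_sum (w : ℂ) (m : ℕ) :
    (1 - w) ^ 2 * ∑ k ∈ Finset.range m, (k : ℂ) * w ^ k
      = w - m * w ^ m + ((m : ℂ) - 1) * w ^ (m + 1) := by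
  induction m with
  | zero => simp
  | succ n ih =>
    rw [Finset.sum_range_succ, mul_add, ih]
    push_cast
    ring


lemma filter_eq_image (k : ℤ) (hk : 0 < k) :
    (Finset.Ioo (-k) k).filter (fun j => Odd (j + k))
      = (Finset.range k.toNat).image (fun i : ℕ => k - 1 - 2 * i) := by
  ext j
  simp only [Finset.mem_filter, Finset.mem_Ioo, Finset.mem_image, Finset.mem_range, Int.odd_iff]
  constructor
  · rintro ⟨⟨h1, h2⟩, h3⟩
    exact ⟨((k - 1 - j) / 2).toNat, by omega, by omega⟩
  · rintro ⟨i, hi, rfl⟩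
    omega

lemma Jinner_sum_aux (a b : ℂ) (ha : Complex.exp (Complex.I * a) = -1) (k : ℤ) (hk : 0 < k) :
    ∑ j ∈ (Finset.Ioo (-k) k).filter (fun j => Odd (j + k)),
        Complex.exp (Complex.I * a * j) * Complex.exp (Complex.I * b * k)
      = (k : ℂ) * (-(-1 : ℂ) ^ k * Complex.exp (Complex.I * b * k)) := by
  rw [filter_eq_image k hk,
    Finset.sum_image (by intro i _ i' _ h; simp only at h; omega)]
  have hterm : ∀ i : ℕ, Complex.exp (Complex.I * a * ((k - 1 - 2 * (i:ℤ) : ℤ) : ℂ))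
      = -(-1 : ℂ) ^ k := by
    intro i
    have h1 : Complex.I * a * ((k - 1 - 2 * (i:ℤ) : ℤ) : ℂ)
        = ((k - 1 - 2 * (i:ℤ) : ℤ) : ℂ) * (Complex.I * a) := by ring
    rw [h1, Complex.exp_int_mul, ha]
    have h2 : (k - 1 - 2 * (i:ℤ)) = k + (-1 - 2 * i) := by ring
    have h3 : ((-1:ℂ)) ^ (-1 - 2 * (i:ℤ)) = -1 :=
      Odd.neg_one_zpow ⟨-1 - (i:ℤ), by ring⟩
    rw [h2, zpow_add₀ (by norm_num : (-1:ℂ) ≠ 0) k (-1 - 2 * (i:ℤ)), h3]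
    ring
  calc ∑ i ∈ Finset.range k.toNat,
        Complex.exp (Complex.I * a * ((k - 1 - 2 * (i:ℤ) : ℤ) : ℂ)) *
          Complex.exp (Complex.I * b * k)
      = ∑ _i ∈ Finset.range k.toNat, (-(-1:ℂ) ^ k * Complex.exp (Complex.I * b * k)) := by
        refine Finset.sum_congr rfl fun i _ => ?_
        rw [hterm i]
    _ = (k : ℂ) * (-(-1 : ℂ) ^ k * Complex.exp (Complex.I * b * k)) := by
        rw [Finset.sum_const, nsmul_eq_mul, Finset.card_range]
        congr 1
        have : ((k.toNat : ℤ) : ℂ) = (k : ℂ) := by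
          rw [Int.toNat_of_nonneg hk.le]
        push_cast at this ⊢
        exact this

theorem Jsum_negone_ne_negone (m : ℕ) (hm : 0 < m) (a b : ℂ)
    (ha : Complex.exp (Complex.I * a) = -1) (hb : Complex.exp (Complex.I * b) ≠ -1) :
    Jsum m a b
      = (-1) ^ m * (m - 1) * Complex.exp (Complex.I * b * m) / (1 + Complex.exp (Complex.I * b)) +
        (Complex.exp (Complex.I * b) + (-1) ^ m * Complex.exp (Complex.I * b * m)) /
          (1 + Complex.exp (Complex.I * b)) ^ 2 := by
  set z := Complex.exp (Complex.I * b) with hz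
  have h1 : (1 : ℂ) + z ≠ 0 := fun h => hb (by linear_combination h)
  -- step 1: rewrite Jsum as a natural sum
  have key : Jsum m a b = ∑ n ∈ Finset.range m, -((n:ℂ)) * (-z) ^ n := by
    rw [Jsum]
    rw [show ∑ k ∈ Finset.Ioo (0 : ℤ) (m : ℤ),
        ∑ j ∈ (Finset.Ioo (-k) k).filter (fun j => Odd (j + k)),
          Complex.exp (Complex.I * a * j) * Complex.exp (Complex.I * b * k)
      = ∑ k ∈ Finset.Ioo (0 : ℤ) (m : ℤ),
          (k : ℂ) * (-(-1 : ℂ) ^ k * Complex.exp (Complex.I * b * k)) from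
      Finset.sum_congr rfl fun k hk =>
        Jinner_sum_aux a b ha k (Finset.mem_Ioo.mp hk).1]
    rw [show m = (m - 1) + 1 from (Nat.succ_pred_eq_of_pos hm).symm]
    rw [Finset.sum_range_succ' (fun n => -((n:ℂ)) * (-z) ^ n) (m - 1)]
    simp only [Nat.cast_zero, neg_zero, zero_mul, add_zero]
    apply Finset.sum_nbij' (fun k : ℤ => (k - 1).toNat) (fun i : ℕ => (i : ℤ) + 1)
    · intro k hk
      simp only [Finset.mem_Ioo] at hk
      simp only [Finset.mem_range]
      omega
    · intro i hi
      simp only [Finset.mem_range] at hi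
      simp only [Finset.mem_Ioo]
      omega
    · intro k hk; simp only [Finset.mem_Ioo] at hk; omega
    · intro i hi; simp only [Finset.mem_range] at hi; omega
    · intro k hk
      simp only [Finset.mem_Ioo] at hk
      obtain ⟨n, rfl⟩ : ∃ n : ℕ, k = (n : ℤ) + 1 := ⟨(k - 1).toNat, by omega⟩
      have e1 : (((n : ℤ) + 1 : ℤ) - 1).toNat = n := by omega
      have e2 : ((-1 : ℂ)) ^ ((n : ℤ) + 1) = (-1 : ℂ) ^ (n + 1) := by
        rw [show ((n : ℤ) + 1) = ((n + 1 : ℕ) : ℤ) by push_cast; ring, zpow_natCast]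
      have e3 : Complex.exp (Complex.I * b * (((n : ℤ) + 1 : ℤ) : ℂ)) = z ^ (n + 1) := by
        rw [show Complex.I * b * (((n : ℤ) + 1 : ℤ) : ℂ)
            = ((n + 1 : ℕ) : ℂ) * (Complex.I * b) by push_cast; ring,
          Complex.exp_nat_mul]
      rw [e1, e2, e3]
      rw [show ((-z) ^ (n + 1) : ℂ) = (-1) ^ (n + 1) * z ^ (n + 1) by rw [neg_pow]]
      push_cast
      ring
  rw [key]
  -- step 2: closed form
  have haux := aux_sum (-z) m
  have hw : (1 : ℂ) - (-z) = 1 + z := by ring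
  rw [hw] at haux
  have hsum : ∑ n ∈ Finset.range m, -((n:ℂ)) * (-z) ^ n
      = -((∑ k ∈ Finset.range m, (k : ℂ) * (-z) ^ k)) := by
    rw [← Finset.sum_neg_distrib]
    exact Finset.sum_congr rfl fun k _ => by ring
  rw [hsum]
  have hS : (∑ k ∈ Finset.range m, (k : ℂ) * (-z) ^ k)
      = ((-z) - m * (-z) ^ m + ((m : ℂ) - 1) * (-z) ^ (m + 1)) / (1 + z) ^ 2 := by
    field_simp
    linear_combination haux
  rw [hS]
  have hzm : Complex.exp (Complex.I * b * (m : ℂ)) = z ^ m := by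
    rw [show Complex.I * b * (m : ℂ) = (m : ℂ) * (Complex.I * b) by ring,
      Complex.exp_nat_mul]
  rw [hzm]
  rw [neg_pow z m, neg_pow z (m + 1)]
  field_simp
  ring
end

section
/- Let a, b ∈ (π/m)ℤ with e^{ia} = 1 and e^{ib} ≠ 1. Then I(a,b) = -m if e^{ibm} = 1, and I(a,b) = m - 1 + ((1+e^{ib})/(1-e^{ib}))² if e^{ibm} = -1. -/
open Complex Finset

lemma card_odd_filter (k : ℤ) (hk : 0 < k) :
    ((((Finset.Ioo (-k) k).filter fun j => Odd (j + k))).card : ℤ) = k := by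
  have himg : ((Finset.Ioo (-k) k).filter fun j => Odd (j + k)) =
      (Finset.range k.toNat).image (fun t : ℕ => 2 * (t : ℤ) + 1 - k) := by
    ext j
    simp only [Finset.mem_filter, Finset.mem_Ioo, Finset.mem_image, Finset.mem_range,
      Int.odd_iff]
    constructor
    · rintro ⟨⟨h1, h2⟩, h3⟩
      exact ⟨((j + k - 1) / 2).toNat, by omega, by omega⟩
    · rintro ⟨t, ht, rfl⟩
      omega
  rw [himg, Finset.card_image_of_injective _ (fun x y h => by omega), Finset.card_range]
  omega

lemma keyF (m : ℕ) (z : ℂ) :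
    (1 - z) * ∑ k ∈ Finset.range m, (k : ℂ) * z ^ k =
      (∑ k ∈ Finset.range m, z ^ k) - 1 + (1 - (m : ℂ)) * z ^ m := by
  induction m with
  | zero => simp
  | succ n ih =>
    rw [Finset.sum_range_succ, Finset.sum_range_succ]
    push_cast
    linear_combination ih

lemma Jsum_eq (m : ℕ) (a c : ℝ) (ha : Complex.exp (Complex.I * a) = 1) :
    Jsum m (a : ℂ) (c : ℂ) =
      ∑ k ∈ Finset.range m, (k : ℂ) * Complex.exp (Complex.I * c) ^ k := by
  unfold Jsum
  have step1 : ∀ k ∈ Finset.Ioo (0 : ℤ) (m : ℤ),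
      (∑ j ∈ (Finset.Ioo (-k) k).filter fun j => Odd (j + k),
        Complex.exp (Complex.I * (a : ℂ) * j) * Complex.exp (Complex.I * (c : ℂ) * k)) =
      (k : ℂ) * Complex.exp (Complex.I * c) ^ k := by
    intro k hk
    rw [Finset.mem_Ioo] at hk
    have h1 : ∀ j : ℤ, Complex.exp (Complex.I * (a : ℂ) * j) = 1 := by
      intro j
      rw [show Complex.I * (a : ℂ) * j = (j : ℂ) * (Complex.I * a) by ring,
        Complex.exp_int_mul, ha, one_zpow]
    have h2 : Complex.exp (Complex.I * (c : ℂ) * k) = Complex.exp (Complex.I * c) ^ k := by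
      rw [show Complex.I * (c : ℂ) * k = (k : ℂ) * (Complex.I * c) by ring,
        Complex.exp_int_mul]
    simp only [h1, one_mul, h2, Finset.sum_const, nsmul_eq_mul]
    congr 1
    exact_mod_cast card_odd_filter k hk.1
  rw [Finset.sum_congr rfl step1]
  have h4 : ∑ n ∈ Finset.Ico 1 m, (n : ℂ) * Complex.exp (Complex.I * c) ^ n =
      ∑ n ∈ Finset.range m, (n : ℂ) * Complex.exp (Complex.I * c) ^ n := by
    apply Finset.sum_subset
    · intro x hx
      rw [Finset.mem_Ico] at hx
      rw [Finset.mem_range]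
      omega
    · intro x hx hnx
      rw [Finset.mem_range] at hx
      rw [Finset.mem_Ico] at hnx
      have hx0 : x = 0 := by omega
      simp [hx0]
  rw [← h4]
  rw [Finset.sum_nbij' (i := fun k : ℤ => k.toNat) (j := fun n : ℕ => (n : ℤ))]
  · intro k hk; rw [Finset.mem_Ioo] at hk; rw [Finset.mem_Ico]; omega
  · intro n hn; rw [Finset.mem_Ico] at hn; rw [Finset.mem_Ioo]; constructor <;> omega
  · intro k hk; rw [Finset.mem_Ioo] at hk; omega
  · intro n hn; simp
  · intro k hk
    rw [Finset.mem_Ioo] at hk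
    have hk' : k = (k.toNat : ℤ) := by omega
    rw [hk', zpow_natCast]
    norm_cast

theorem Isum_one_ne_one (m : ℕ) (hm : 0 < m) (a b : ℝ)
    (haZ : ∃ p : ℤ, a = Real.pi * p / m) (hbZ : ∃ q : ℤ, b = Real.pi * q / m)
    (ha : Complex.exp (Complex.I * a) = 1) (hb : Complex.exp (Complex.I * b) ≠ 1) :
    (Complex.exp (Complex.I * b * m) = 1 → Isum m a b = -m) ∧
    (Complex.exp (Complex.I * b * m) = -1 →
      Isum m a b = m - 1 +
        ((1 + Complex.exp (Complex.I * b)) / (1 - Complex.exp (Complex.I * b))) ^ 2) := by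
  set z := Complex.exp (Complex.I * b) with hzdef
  have hz0 : z ≠ 0 := Complex.exp_ne_zero _
  have hzne1 : z ≠ 1 := hb
  have hzi : z⁻¹ ≠ 1 := fun h => hzne1 (inv_eq_one.mp h)
  have hz1 : (1 : ℂ) - z ≠ 0 := sub_ne_zero.mpr fun h => hzne1 h.symm
  have hz1' : z - 1 ≠ 0 := sub_ne_zero.mpr hzne1
  have hzi1 : (1 : ℂ) - z⁻¹ ≠ 0 := sub_ne_zero.mpr fun h => hzi h.symm
  have hzi1' : z⁻¹ - 1 ≠ 0 := sub_ne_zero.mpr hzi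
  have hJb : Jsum m (a : ℂ) (b : ℂ) = ∑ k ∈ Finset.range m, (k : ℂ) * z ^ k :=
    Jsum_eq m a b ha
  have hJnb : Jsum m (a : ℂ) (-(b : ℂ)) = ∑ k ∈ Finset.range m, (k : ℂ) * (z⁻¹) ^ k := by
    have h := Jsum_eq m a (-b) ha
    rw [show ((-b : ℝ) : ℂ) = -(b : ℂ) by push_cast; ring] at h
    rw [h]
    congr 1
    funext k
    rw [show Complex.I * (-(b : ℂ)) = -(Complex.I * b) by ring, Complex.exp_neg]
  have hIsum : Isum m (a : ℂ) (b : ℂ) =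
      (∑ k ∈ Finset.range m, (k : ℂ) * z ^ k) +
      ∑ k ∈ Finset.range m, (k : ℂ) * (z⁻¹) ^ k := by
    rw [Isum, hJb, hJnb]
  have h1 := keyF m z
  have h2 := keyF m z⁻¹
  have hgs : ∑ k ∈ Finset.range m, z ^ k = (z ^ m - 1) / (z - 1) := geom_sum_eq hzne1 m
  have hgs' : ∑ k ∈ Finset.range m, (z⁻¹) ^ k = ((z⁻¹) ^ m - 1) / (z⁻¹ - 1) :=
    geom_sum_eq hzi m
  have hzm : Complex.exp (Complex.I * b * m) = z ^ m := by
    rw [show Complex.I * (b : ℂ) * m = (m : ℂ) * (Complex.I * b) by ring,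
      Complex.exp_nat_mul]
  have hzim : (z⁻¹) ^ m = (z ^ m)⁻¹ := by rw [inv_pow]
  rw [hgs] at h1
  rw [hgs', hzim] at h2
  constructor
  · intro hm1
    rw [hzm] at hm1
    rw [hm1] at h1
    rw [hm1, inv_one] at h2
    rw [hIsum]
    have e1 : (∑ k ∈ Finset.range m, (k : ℂ) * z ^ k) = -(m : ℂ) / (1 - z) := by
      rw [eq_div_iff hz1]
      linear_combination h1
    have e2 : (∑ k ∈ Finset.range m, (k : ℂ) * (z⁻¹) ^ k) = -(m : ℂ) / (1 - z⁻¹) := by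
      rw [eq_div_iff hzi1]
      linear_combination h2
    rw [e1, e2]
    field_simp
    ring
  · intro hm2
    rw [hzm] at hm2
    rw [hm2] at h1
    rw [hm2, show ((-1 : ℂ))⁻¹ = -1 by norm_num] at h2
    rw [hIsum]
    have e1 : (∑ k ∈ Finset.range m, (k : ℂ) * z ^ k) =
        ((-1 - 1) / (z - 1) - 1 + (1 - (m : ℂ)) * (-1)) / (1 - z) := by
      rw [eq_div_iff hz1]
      linear_combination h1
    have e2 : (∑ k ∈ Finset.range m, (k : ℂ) * (z⁻¹) ^ k) =
        ((-1 - 1) / (z⁻¹ - 1) - 1 + (1 - (m : ℂ)) * (-1)) / (1 - z⁻¹) := by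
      rw [eq_div_iff hzi1]
      linear_combination h2
    rw [e1, e2]
    field_simp
    ring
end

section
/- Let a, b ∈ (π/m)ℤ with e^{ia} ≠ ±1. If e^{i(a+b)} = 1 and e^{i(a-b)} ≠ 1, then I(a,b) = (1 - e^{i(a-b)m})/(e^{ia} - e^{-ia}) · (1 + e^{i(a-b)})/(1 - e^{i(a-b)}). -/
open Complex Finset

lemma aux_inner_sum (z : ℂ) (hz : z ≠ 0) (k : ℤ) (hk : 0 < k) :
    ∑ j ∈ (Finset.Ioo (-k) k).filter (fun j => Odd (j + k)), z ^ j
      = z ^ (1 - k) * ∑ t ∈ Finset.range k.toNat, (z ^ 2) ^ t := by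
  rw [Finset.mul_sum]
  refine Finset.sum_nbij' (fun j => ((j + k - 1) / 2).toNat) (fun t => 2 * (t : ℤ) + 1 - k)
    ?_ ?_ ?_ ?_ ?_
  · intro j hj
    simp only [Finset.mem_filter, Finset.mem_Ioo] at hj
    obtain ⟨⟨h1, h2⟩, c, hc⟩ := hj
    simp only [Finset.mem_range]
    omega
  · intro t ht
    simp only [Finset.mem_range] at ht
    simp only [Finset.mem_filter, Finset.mem_Ioo]
    refine ⟨⟨by omega, by omega⟩, ⟨t, by omega⟩⟩
  · intro j hj
    simp only [Finset.mem_filter, Finset.mem_Ioo] at hj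
    obtain ⟨⟨h1, h2⟩, c, hc⟩ := hj
    omega
  · intro t ht
    simp only [Finset.mem_range] at ht
    omega
  · intro j hj
    simp only [Finset.mem_filter, Finset.mem_Ioo] at hj
    obtain ⟨⟨h1, h2⟩, c, hc⟩ := hj
    rw [← pow_mul, ← zpow_natCast z, ← zpow_add₀ hz]
    congr 1
    omega

lemma aux_sum_zero (w : ℂ) (hw0 : w ≠ 0) (m : ℕ) (hwm : w ^ (m : ℤ) = 1) :
    ∑ k ∈ Finset.Ioo (0 : ℤ) (m : ℤ), (w ^ k - w ^ (-k)) = 0 := by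
  have g_mem : ∀ k (_ : k ∈ Finset.Ioo (0 : ℤ) (m : ℤ)),
      (m : ℤ) - k ∈ Finset.Ioo (0 : ℤ) (m : ℤ) := by
    intro k hk
    simp only [Finset.mem_Ioo] at hk ⊢
    omega
  refine Finset.sum_involution (fun k _ => (m : ℤ) - k) ?_ ?_ g_mem ?_
  · intro k hk
    have h1 : w ^ ((m : ℤ) - k) = w ^ (-k) := by
      rw [zpow_sub₀ hw0, hwm, one_div, ← zpow_neg]
    have h2 : w ^ (-((m : ℤ) - k)) = w ^ k := by
      rw [neg_sub, zpow_sub₀ hw0, hwm, div_one]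
    rw [h1, h2]; ring
  · intro k hk hf hcon
    apply hf
    have hcon' : (m : ℤ) - k = k := hcon
    simp only [Finset.mem_Ioo] at hk
    have : w ^ k * w ^ k = 1 := by
      rw [← zpow_add₀ hw0, show k + k = (m : ℤ) by omega, hwm]
    have hinv : w ^ (-k) = w ^ k := by
      rw [zpow_neg, inv_eq_of_mul_eq_one_right this]
    rw [hinv, sub_self]
  · intro k hk
    omega
theorem Isum_sum_one (m : ℕ) (hm : 0 < m) (a b : ℝ)
    (haZ : ∃ p : ℤ, a = Real.pi * p / m) (hbZ : ∃ q : ℤ, b = Real.pi * q / m)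
    (ha1 : Complex.exp (Complex.I * a) ≠ 1) (ha2 : Complex.exp (Complex.I * a) ≠ -1)
    (hab : Complex.exp (Complex.I * ((a : ℂ) + b)) = 1)
    (hab' : Complex.exp (Complex.I * ((a : ℂ) - b)) ≠ 1) :
    Isum m a b
      = (1 - Complex.exp (Complex.I * ((a : ℂ) - b) * m)) /
          (Complex.exp (Complex.I * a) - Complex.exp (-(Complex.I * a))) *
        ((1 + Complex.exp (Complex.I * ((a : ℂ) - b))) /
            (1 - Complex.exp (Complex.I * ((a : ℂ) - b)))) := by

  obtain ⟨p, hp⟩ := haZ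
  set z : ℂ := Complex.exp (Complex.I * a) with hzdef
  have hz : z ≠ 0 := Complex.exp_ne_zero _
  have hm0 : (m : ℝ) ≠ 0 := Nat.cast_ne_zero.mpr hm.ne'
  have hw1 : z ^ 2 ≠ 1 := by
    intro h
    have hfac : (z - 1) * (z + 1) = 0 := by linear_combination h
    rcases mul_eq_zero.mp hfac with h' | h'
    · exact ha1 (sub_eq_zero.mp h')
    · exact ha2 (eq_neg_of_add_eq_zero_left h')
  have hzm : (z ^ 2) ^ m = 1 := by
    rw [hzdef, ← pow_mul, ← Complex.exp_nat_mul]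
    have hkey : ((2 * m : ℕ) : ℂ) * (Complex.I * (a : ℂ))
        = (p : ℤ) * (2 * (Real.pi : ℂ) * Complex.I) := by
      have ha : (a : ℂ) = (Real.pi : ℂ) * p / m := by
        rw [hp]; push_cast; ring
      have hmc : (m : ℂ) ≠ 0 := Nat.cast_ne_zero.mpr hm.ne'
      rw [ha]
      field_simp
      push_cast; ring
    rw [hkey, Complex.exp_int_mul_two_pi_mul_I]
  have hb : Complex.exp (Complex.I * b) = z⁻¹ := by
    have h1 : z * Complex.exp (Complex.I * b) = 1 := by
      rw [hzdef, ← Complex.exp_add, ← mul_add]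
      exact hab
    exact (inv_eq_of_mul_eq_one_right h1).symm
  have hexpj : ∀ j : ℤ, Complex.exp (Complex.I * (a : ℂ) * j) = z ^ j := by
    intro j
    rw [show Complex.I * (a : ℂ) * j = (j : ℂ) * (Complex.I * a) by ring, Complex.exp_int_mul]
  have hexpb : ∀ k : ℤ, Complex.exp (Complex.I * (b : ℂ) * k) = z ^ (-k) := by
    intro k
    rw [show Complex.I * (b : ℂ) * k = (k : ℂ) * (Complex.I * b) by ring, Complex.exp_int_mul,
      hb, inv_zpow, ← zpow_neg]
  have hexpnb : ∀ k : ℤ, Complex.exp (Complex.I * (-(b : ℂ)) * k) = z ^ k := by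
    intro k
    rw [show Complex.I * (-(b : ℂ)) * k = ((-k : ℤ) : ℂ) * (Complex.I * b) by push_cast; ring,
      Complex.exp_int_mul, hb, inv_zpow, ← zpow_neg, neg_neg]
  have hLHS : Isum m a b = 0 := by
    have hcalc : Isum m a b
        = ∑ k ∈ Finset.Ioo (0 : ℤ) (m : ℤ),
            (z / (z ^ 2 - 1)) * ((z ^ 2) ^ k - (z ^ 2) ^ (-k)) := by
      unfold Isum Jsum
      rw [← Finset.sum_add_distrib]
      refine Finset.sum_congr rfl ?_
      intro k hk
      simp only [Finset.mem_Ioo] at hk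
      obtain ⟨hk0, hkm⟩ := hk
      have hinner : ∑ j ∈ (Finset.Ioo (-k) k).filter (fun j => Odd (j + k)),
          Complex.exp (Complex.I * (a : ℂ) * j)
          = z ^ (1 - k) * (((z ^ 2) ^ k.toNat - 1) / (z ^ 2 - 1)) := by
        rw [show (∑ j ∈ (Finset.Ioo (-k) k).filter (fun j => Odd (j + k)),
            Complex.exp (Complex.I * (a : ℂ) * j))
            = ∑ j ∈ (Finset.Ioo (-k) k).filter (fun j => Odd (j + k)), z ^ j from
          Finset.sum_congr rfl fun j _ => hexpj j]
        rw [aux_inner_sum z hz k hk0, geom_sum_eq hw1]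
      have e1 : ∀ j : ℤ, Complex.exp (Complex.I * (a:ℂ) * j) * Complex.exp (Complex.I * (b:ℂ) * k)
          = Complex.exp (Complex.I * (a:ℂ) * j) * z ^ (-k) := fun j => by rw [hexpb]
      have e2 : ∀ j : ℤ, Complex.exp (Complex.I * (a:ℂ) * j) * Complex.exp (Complex.I * (-(b:ℂ)) * k)
          = Complex.exp (Complex.I * (a:ℂ) * j) * z ^ k := fun j => by rw [hexpnb]
      calc (∑ j ∈ (Finset.Ioo (-k) k).filter (fun j => Odd (j + k)),
              Complex.exp (Complex.I * (a:ℂ) * j) * Complex.exp (Complex.I * (b:ℂ) * k))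
            + ∑ j ∈ (Finset.Ioo (-k) k).filter (fun j => Odd (j + k)),
              Complex.exp (Complex.I * (a:ℂ) * j) * Complex.exp (Complex.I * (-(b:ℂ)) * k)
          = (∑ j ∈ (Finset.Ioo (-k) k).filter (fun j => Odd (j + k)),
              Complex.exp (Complex.I * (a:ℂ) * j)) * (z ^ (-k) + z ^ k) := by
            rw [Finset.sum_congr rfl fun j _ => e1 j, Finset.sum_congr rfl fun j _ => e2 j,
              ← Finset.sum_mul, ← Finset.sum_mul, ← mul_add]
        _ = (z / (z ^ 2 - 1)) * ((z ^ 2) ^ k - (z ^ 2) ^ (-k)) := by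
            rw [hinner]
            have hwk : ((z ^ 2) ^ k.toNat : ℂ) = z ^ k * z ^ k := by
              rw [← zpow_natCast (z ^ 2), Int.toNat_of_nonneg hk0.le, sq, mul_zpow]
            have hwk' : (z ^ 2) ^ (-k) = z ^ (-k) * z ^ (-k) := by
              rw [sq, mul_zpow]
            have hwkk : (z ^ 2) ^ k = z ^ k * z ^ k := by
              rw [sq, mul_zpow]
            have hu : z ^ (1 - k) = z * z ^ (-k) := by
              rw [sub_eq_add_neg, zpow_add₀ hz, zpow_one]
            have huv : z ^ k * z ^ (-k) = 1 := by
              rw [← zpow_add₀ hz, add_neg_cancel, zpow_zero]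
            have hne : z ^ 2 - 1 ≠ 0 := sub_ne_zero.mpr hw1
            rw [hwk, hwk', hwkk, hu]
            have key : z * z ^ (-k) * (z ^ k * z ^ k - 1) * (z ^ (-k) + z ^ k)
                = z * (z ^ k * z ^ k - z ^ (-k) * z ^ (-k)) := by
              linear_combination (z * (z ^ k) ^ 2 + z * (z ^ k * z ^ (-k))) * huv
            calc z * z ^ (-k) * ((z ^ k * z ^ k - 1) / (z ^ 2 - 1)) * (z ^ (-k) + z ^ k)
                = (z * z ^ (-k) * (z ^ k * z ^ k - 1) * (z ^ (-k) + z ^ k)) / (z ^ 2 - 1) := by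
                  ring
              _ = (z * (z ^ k * z ^ k - z ^ (-k) * z ^ (-k))) / (z ^ 2 - 1) := by rw [key]
              _ = z / (z ^ 2 - 1) * (z ^ k * z ^ k - z ^ (-k) * z ^ (-k)) := by ring
    rw [hcalc, ← Finset.mul_sum,
      aux_sum_zero (z ^ 2) (pow_ne_zero 2 hz) m (by rw [zpow_natCast]; exact hzm), mul_zero]
  have habm : Complex.exp (Complex.I * ((a : ℂ) - b)) = z ^ 2 := by
    rw [mul_sub, Complex.exp_sub, hb, ← hzdef, div_eq_mul_inv, inv_inv, ← sq]
  have hRHS : Complex.exp (Complex.I * ((a : ℂ) - b) * (m : ℂ)) = 1 := by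
    rw [show Complex.I * ((a : ℂ) - b) * (m : ℂ)
        = ((m : ℕ) : ℂ) * (Complex.I * ((a : ℂ) - b)) by push_cast; ring,
      Complex.exp_nat_mul, habm, hzm]
  rw [hLHS, hRHS, sub_self, zero_div, zero_mul]
end

section
/- For any triple (u,u',u'') ∈ 𝔽^(m) whose 'charge defect' D := (j+j'+j'') - (k+k'+k'') satisfies D ∉ mℤ, the fusion coefficient N_{u,u',u''} = ∑_{v ∈ NS^(m)} S^(m)_{u,v} S^(m)_{u',v} S^(m)_{u'',v} / S^(m)_{(1/2,1/2),v} equals 0. -/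
open Complex Finset

private lemma cosNatPi (n : ℕ) : Complex.cos (n * (Real.pi : ℂ)) = (-1 : ℂ) ^ n := by
  induction n with
  | zero => simp
  | succ k ih =>
    push_cast
    rw [add_mul, one_mul, Complex.cos_add_pi, ih]
    ring

private lemma sinReflect (n : ℕ) (z : ℂ) :
    Complex.sin (n * (Real.pi : ℂ) - z) = -((-1 : ℂ) ^ n * Complex.sin z) := by
  rw [Complex.sin_sub, Complex.sin_nat_mul_pi, cosNatPi]
  ring

private lemma core (m : ℕ) (B₁ B₂ B₃ : ℕ) (D : ℤ)
    (hodd : Odd ((B₁ : ℤ) + B₂ + B₃ + D)) (hD : ∀ t : ℤ, D ≠ (m : ℤ) * t) :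
    ∑ pq ∈ ((Finset.range m ×ˢ Finset.range m).filter fun p => p.1 + p.2 + 1 < m),
      Complex.exp ((Real.pi : ℂ) * I * D * ((pq.1 : ℂ) - pq.2) / m) *
        (Complex.sin ((Real.pi : ℂ) * B₁ * ((pq.1 : ℂ) + pq.2 + 1) / m) *
          Complex.sin ((Real.pi : ℂ) * B₂ * ((pq.1 : ℂ) + pq.2 + 1) / m) *
          Complex.sin ((Real.pi : ℂ) * B₃ * ((pq.1 : ℂ) + pq.2 + 1) / m) /
          Complex.sin ((Real.pi : ℂ) * ((pq.1 : ℂ) + pq.2 + 1) / m)) = 0 := by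
  rcases Nat.eq_zero_or_pos m with hm | hm
  · subst hm; simp
  have hm' : (m : ℂ) ≠ 0 := Nat.cast_ne_zero.mpr hm.ne'
  have hpi : (Real.pi : ℂ) ≠ 0 := Complex.ofReal_ne_zero.mpr Real.pi_ne_zero
  set x : ℂ := Complex.exp ((Real.pi : ℂ) * I * D / m) with hxdef
  have hx0 : x ≠ 0 := Complex.exp_ne_zero _
  -- x ^ 2 ≠ 1
  have hx2 : x ^ 2 ≠ 1 := by
    intro h
    rw [hxdef, ← Complex.exp_nat_mul, Complex.exp_eq_one_iff] at h
    obtain ⟨n, hn⟩ := h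
    have h4 : (D : ℂ) = m * n := by
      have hne : (2 * (Real.pi : ℂ) * I) ≠ 0 := by
        simp [hpi, Complex.I_ne_zero]
      apply mul_left_cancel₀ hne
      field_simp at hn
      linear_combination ((Real.pi : ℂ) * I) * hn
    exact hD n (by exact_mod_cast h4)
  have hxx : x - x⁻¹ ≠ 0 := by
    intro h
    apply hx2
    have h1 : x = x⁻¹ := sub_eq_zero.mp h
    have h2 := congrArg (· * x) h1
    simp only [inv_mul_cancel₀ hx0] at h2
    rw [sq]
    exact h2
  -- x ^ m = (-1) ^ D
  have hxm : x ^ m = (-1 : ℂ) ^ D := by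
    have harg : (m : ℂ) * ((Real.pi : ℂ) * I * D / m) = (D : ℂ) * ((Real.pi : ℂ) * I) := by
      field_simp
    rw [hxdef, ← Complex.exp_nat_mul, harg, Complex.exp_int_mul, Complex.exp_pi_mul_I]
  -- abbreviations
  set F : ℕ → ℂ := fun β =>
      Complex.sin ((Real.pi : ℂ) * B₁ * β / m) * Complex.sin ((Real.pi : ℂ) * B₂ * β / m) *
        Complex.sin ((Real.pi : ℂ) * B₃ * β / m) / Complex.sin ((Real.pi : ℂ) * β / m)
    with hFdef
  -- step 1 : reindex onto (β, t)
  have step1 :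
      (∑ pq ∈ ((Finset.range m ×ˢ Finset.range m).filter fun p => p.1 + p.2 + 1 < m),
        Complex.exp ((Real.pi : ℂ) * I * D * ((pq.1 : ℂ) - pq.2) / m) *
          (Complex.sin ((Real.pi : ℂ) * B₁ * ((pq.1 : ℂ) + pq.2 + 1) / m) *
            Complex.sin ((Real.pi : ℂ) * B₂ * ((pq.1 : ℂ) + pq.2 + 1) / m) *
            Complex.sin ((Real.pi : ℂ) * B₃ * ((pq.1 : ℂ) + pq.2 + 1) / m) /
            Complex.sin ((Real.pi : ℂ) * ((pq.1 : ℂ) + pq.2 + 1) / m))) =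
      ∑ s ∈ (Finset.Ico 1 m).sigma fun β => Finset.range β,
        Complex.exp ((Real.pi : ℂ) * I * D * (2 * (s.2 : ℂ) - s.1 + 1) / m) * F s.1 := by
    refine Finset.sum_bij' (fun pq _ => (⟨pq.1 + pq.2 + 1, pq.1⟩ : Σ _ : ℕ, ℕ))
      (fun s _ => (s.2, s.1 - 1 - s.2)) ?_ ?_ ?_ ?_ ?_
    · intro a ha
      simp only [Finset.mem_filter, Finset.mem_product, Finset.mem_range] at ha
      simp only [Finset.mem_sigma, Finset.mem_Ico, Finset.mem_range]
      omega
    · intro s hs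
      simp only [Finset.mem_sigma, Finset.mem_Ico, Finset.mem_range] at hs
      simp only [Finset.mem_filter, Finset.mem_product, Finset.mem_range]
      omega
    · intro a ha
      simp only [Finset.mem_filter, Finset.mem_product, Finset.mem_range] at ha
      exact Prod.ext rfl (by simp)
    · intro s hs
      simp only [Finset.mem_sigma, Finset.mem_Ico, Finset.mem_range] at hs
      exact Sigma.ext (by simp; omega) (heq_of_eq rfl)
    · intro a ha
      have hc : ((a.1 + a.2 + 1 : ℕ) : ℂ) = (a.1 : ℂ) + (a.2 : ℂ) + 1 := by push_cast; ring
      have he : (Real.pi : ℂ) * I * D * (2 * (a.1 : ℂ) - ((a.1 : ℂ) + (a.2 : ℂ) + 1) + 1) / m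
          = (Real.pi : ℂ) * I * D * ((a.1 : ℂ) - (a.2 : ℂ)) / m := by ring
      simp only [hFdef, hc, he]
  rw [step1, Finset.sum_sigma]
  have hx21 : x ^ 2 - 1 ≠ 0 := sub_ne_zero.mpr hx2
  have hinner : ∀ β ∈ Finset.Ico 1 m,
      (∑ t ∈ Finset.range β,
        Complex.exp ((Real.pi : ℂ) * I * D * (2 * (t : ℂ) - β + 1) / m) * F β)
        = (x ^ β - (x ^ β)⁻¹) / (x - x⁻¹) * F β := by
    intro β hβ
    rw [← Finset.sum_mul]
    congr 1
    have hterm : ∀ t : ℕ, Complex.exp ((Real.pi : ℂ) * I * D * (2 * (t : ℂ) - β + 1) / m)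
        = (x ^ 2) ^ t * (x * (x ^ β)⁻¹) := by
      intro t
      have harg : (Real.pi : ℂ) * I * D * (2 * (t : ℂ) - β + 1) / m
          = ((2 * t : ℕ) : ℂ) * ((Real.pi : ℂ) * I * D / m) +
            (((Real.pi : ℂ) * I * D / m) + -((β : ℂ) * ((Real.pi : ℂ) * I * D / m))) := by
        push_cast
        field_simp
        ring
      rw [harg, Complex.exp_add, Complex.exp_add, Complex.exp_neg, Complex.exp_nat_mul,
        Complex.exp_nat_mul, ← hxdef, pow_mul]
    simp only [hterm]
    rw [← Finset.sum_mul, geom_sum_eq hx2 β]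
    have key : (x ^ 2) ^ β = x ^ β * x ^ β := by
      rw [← pow_mul, two_mul, pow_add]
    have hxb : x ^ β ≠ 0 := pow_ne_zero _ hx0
    rw [key, eq_div_iff hxx, div_mul_eq_mul_div, div_mul_eq_mul_div, div_eq_iff hx21]
    field_simp
  rw [Finset.sum_congr rfl hinner]
  -- sign lemma
  have hsign : (-1 : ℂ) ^ D * ((-1 : ℂ) ^ B₁ * (-1 : ℂ) ^ B₂ * (-1 : ℂ) ^ B₃) = -1 := by
    have h1 : ((-1 : ℂ) ^ B₁ : ℂ) = (-1 : ℂ) ^ (B₁ : ℤ) := (zpow_natCast _ _).symm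
    have h2 : ((-1 : ℂ) ^ B₂ : ℂ) = (-1 : ℂ) ^ (B₂ : ℤ) := (zpow_natCast _ _).symm
    have h3 : ((-1 : ℂ) ^ B₃ : ℂ) = (-1 : ℂ) ^ (B₃ : ℤ) := (zpow_natCast _ _).symm
    rw [h1, h2, h3, ← zpow_add₀ (by norm_num : (-1 : ℂ) ≠ 0),
      ← zpow_add₀ (by norm_num : (-1 : ℂ) ≠ 0), ← zpow_add₀ (by norm_num : (-1 : ℂ) ≠ 0)]
    refine Odd.neg_one_zpow ?_
    have := Int.odd_iff.mp hodd
    refine Int.odd_iff.mpr (by omega)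
  -- sine reflection
  have hsin : ∀ (B : ℕ) (β : ℕ), β ≤ m →
      Complex.sin ((Real.pi : ℂ) * B * ((m - β : ℕ) : ℂ) / m)
        = -((-1 : ℂ) ^ B * Complex.sin ((Real.pi : ℂ) * B * (β : ℂ) / m)) := by
    intro B β hβ
    rw [Nat.cast_sub hβ]
    have harg : (Real.pi : ℂ) * B * ((m : ℂ) - β) / m
        = (B : ℂ) * (Real.pi : ℂ) - (Real.pi : ℂ) * B * (β : ℂ) / m := by
      field_simp
    rw [harg, sinReflect]
  have hsin0 : ∀ β : ℕ, β ≤ m →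
      Complex.sin ((Real.pi : ℂ) * ((m - β : ℕ) : ℂ) / m)
        = Complex.sin ((Real.pi : ℂ) * (β : ℂ) / m) := by
    intro β hβ
    rw [Nat.cast_sub hβ]
    have harg : (Real.pi : ℂ) * ((m : ℂ) - β) / m
        = (Real.pi : ℂ) - (Real.pi : ℂ) * (β : ℂ) / m := by
      field_simp
    rw [harg, Complex.sin_pi_sub]
  have hFrefl : ∀ β : ℕ, β ≤ m →
      F (m - β) = -((-1 : ℂ) ^ B₁ * (-1 : ℂ) ^ B₂ * (-1 : ℂ) ^ B₃) * F β := by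
    intro β hβ
    simp only [hFdef]
    rw [hsin B₁ β hβ, hsin B₂ β hβ, hsin B₃ β hβ, hsin0 β hβ]
    ring
  have hxr : ∀ β : ℕ, β ≤ m →
      x ^ (m - β) - (x ^ (m - β))⁻¹ = -((-1 : ℂ) ^ D * (x ^ β - (x ^ β)⁻¹)) := by
    intro β hβ
    have hinv : ((-1 : ℂ) ^ D)⁻¹ = (-1 : ℂ) ^ D := by
      rcases Int.even_or_odd D with h | h
      · rw [h.neg_one_zpow]; norm_num
      · rw [h.neg_one_zpow]; norm_num
    rw [pow_sub₀ x hx0 hβ, hxm, mul_inv, inv_inv, hinv]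
    ring
  have hneg : ∀ β ∈ Finset.Ico 1 m,
      (x ^ β - (x ^ β)⁻¹) / (x - x⁻¹) * F β
        = -((x ^ (m - β) - (x ^ (m - β))⁻¹) / (x - x⁻¹) * F (m - β)) := by
    intro β hβ
    simp only [Finset.mem_Ico] at hβ
    have hβm : β ≤ m := le_of_lt hβ.2
    rw [hxr β hβm, hFrefl β hβm]
    linear_combination ((x ^ β - (x ^ β)⁻¹) / (x - x⁻¹) * F β) * hsign
  have hsum : ∑ β ∈ Finset.Ico 1 m, (x ^ β - (x ^ β)⁻¹) / (x - x⁻¹) * F β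
      = ∑ β ∈ Finset.Ico 1 m, -((x ^ β - (x ^ β)⁻¹) / (x - x⁻¹) * F β) := by
    refine Finset.sum_bij' (fun β _ => m - β) (fun β _ => m - β) ?_ ?_ ?_ ?_ ?_
    · intro a ha; simp only [Finset.mem_Ico] at ha ⊢; omega
    · intro a ha; simp only [Finset.mem_Ico] at ha ⊢; omega
    · intro a ha; simp only [Finset.mem_Ico] at ha; show m - (m - a) = a; omega
    · intro a ha; simp only [Finset.mem_Ico] at ha; show m - (m - a) = a; omega
    · intro a ha
      rw [hneg a ha]
  rw [Finset.sum_neg_distrib] at hsum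
  linear_combination (1 / 2 : ℂ) * hsum

private lemma NS_ex {m : ℕ} {u : ℝ × ℝ} (h : u ∈ NSfin m) :
    ∃ (B : ℕ) (C : ℤ), u.1 + u.2 = (B : ℝ) ∧ u.1 - u.2 = (C : ℝ) ∧ ((B : ℤ) + C) % 2 = 1 := by
  rw [NSfin, Finset.mem_image] at h
  obtain ⟨p, hp, rfl⟩ := h
  exact ⟨p.1 + p.2 + 1, (p.1 : ℤ) - p.2, by push_cast; ring, by push_cast; ring, by omega⟩

private lemma R_ex {m : ℕ} {u : ℝ × ℝ} (h : u ∈ Rfin m) :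
    ∃ (B : ℕ) (C : ℤ), u.1 + u.2 = (B : ℝ) ∧ u.1 - u.2 = (C : ℝ) ∧ ((B : ℤ) + C) % 2 = 0 := by
  rw [Rfin, Finset.mem_image] at h
  obtain ⟨p, hp, rfl⟩ := h
  exact ⟨p.1 + p.2, (p.1 : ℤ) - p.2, by push_cast; ring, by push_cast; ring, by omega⟩

private lemma Smat_eval {m : ℕ} {u : ℝ × ℝ} {B : ℕ} {C : ℤ}
    (hB : u.1 + u.2 = (B : ℝ)) (hC : u.1 - u.2 = (C : ℝ)) (p q : ℕ) :
    Smat m u ((p : ℝ) + 1 / 2, (q : ℝ) + 1 / 2) =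
      (2 / (m : ℂ)) * Complex.exp ((Real.pi : ℂ) * I * C * ((p : ℂ) - q) / m) *
        Complex.sin ((Real.pi : ℂ) * B * ((p : ℂ) + q + 1) / m) := by
  rw [Smat]
  simp only [hB, hC]
  push_cast
  ring_nf

private lemma Smat0_eval {m : ℕ} (p q : ℕ) :
    Smat m (1 / 2, 1 / 2) ((p : ℝ) + 1 / 2, (q : ℝ) + 1 / 2) =
      (2 / (m : ℂ)) * Complex.sin ((Real.pi : ℂ) * ((p : ℂ) + q + 1) / m) := by
  rw [Smat]
  simp only [show ((1 : ℝ) / 2 - 1 / 2) = 0 from by norm_num,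
    show ((1 : ℝ) / 2 + 1 / 2) = 1 from by norm_num, zero_mul, zero_div,
    Complex.ofReal_zero, mul_zero, Complex.exp_zero, mul_one, one_mul]
  push_cast
  ring_nf

theorem Nfus_eq_zero_of_charge_defect (m : ℕ) (hm : 0 < m) (u u' u'' : ℝ × ℝ)
    (hF : Fmem m u u' u'')
    (hD : ¬ ∃ t : ℤ, (u.1 + u'.1 + u''.1) - (u.2 + u'.2 + u''.2) = (m : ℝ) * t) :
    Nfus m u u' u'' = 0 := by
  have hm' : (m : ℂ) ≠ 0 := Nat.cast_ne_zero.mpr hm.ne'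
  have hmR : (0 : ℝ) < m := by exact_mod_cast hm
  have hex : ∃ (B₁ B₂ B₃ : ℕ) (C₁ C₂ C₃ : ℤ),
      u.1 + u.2 = (B₁ : ℝ) ∧ u.1 - u.2 = (C₁ : ℝ) ∧
      u'.1 + u'.2 = (B₂ : ℝ) ∧ u'.1 - u'.2 = (C₂ : ℝ) ∧
      u''.1 + u''.2 = (B₃ : ℝ) ∧ u''.1 - u''.2 = (C₃ : ℝ) ∧
      Odd ((B₁ : ℤ) + B₂ + B₃ + (C₁ + C₂ + C₃)) := by
    rcases hF with ⟨h1, h2, h3⟩ | ⟨h1, h2, h3⟩ | ⟨h1, h2, h3⟩ | ⟨h1, h2, h3⟩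
    · obtain ⟨B₁, C₁, e1, f1, p1⟩ := NS_ex h1
      obtain ⟨B₂, C₂, e2, f2, p2⟩ := NS_ex h2
      obtain ⟨B₃, C₃, e3, f3, p3⟩ := NS_ex h3
      exact ⟨B₁, B₂, B₃, C₁, C₂, C₃, e1, f1, e2, f2, e3, f3, Int.odd_iff.mpr (by omega)⟩
    · obtain ⟨B₁, C₁, e1, f1, p1⟩ := NS_ex h1
      obtain ⟨B₂, C₂, e2, f2, p2⟩ := R_ex h2
      obtain ⟨B₃, C₃, e3, f3, p3⟩ := R_ex h3
      exact ⟨B₁, B₂, B₃, C₁, C₂, C₃, e1, f1, e2, f2, e3, f3, Int.odd_iff.mpr (by omega)⟩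
    · obtain ⟨B₁, C₁, e1, f1, p1⟩ := R_ex h1
      obtain ⟨B₂, C₂, e2, f2, p2⟩ := NS_ex h2
      obtain ⟨B₃, C₃, e3, f3, p3⟩ := R_ex h3
      exact ⟨B₁, B₂, B₃, C₁, C₂, C₃, e1, f1, e2, f2, e3, f3, Int.odd_iff.mpr (by omega)⟩
    · obtain ⟨B₁, C₁, e1, f1, p1⟩ := R_ex h1
      obtain ⟨B₂, C₂, e2, f2, p2⟩ := R_ex h2
      obtain ⟨B₃, C₃, e3, f3, p3⟩ := NS_ex h3
      exact ⟨B₁, B₂, B₃, C₁, C₂, C₃, e1, f1, e2, f2, e3, f3, Int.odd_iff.mpr (by omega)⟩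
  obtain ⟨B₁, B₂, B₃, C₁, C₂, C₃, e1, f1, e2, f2, e3, f3, hodd⟩ := hex
  have hD' : ∀ t : ℤ, (C₁ + C₂ + C₃ : ℤ) ≠ (m : ℤ) * t := by
    intro t ht
    apply hD
    refine ⟨t, ?_⟩
    have hs : (u.1 + u'.1 + u''.1) - (u.2 + u'.2 + u''.2)
        = ((C₁ + C₂ + C₃ : ℤ) : ℝ) := by push_cast; linarith
    rw [hs]
    exact_mod_cast ht
  have hinj : ∀ x ∈ ((Finset.range m ×ˢ Finset.range m).filter fun p => p.1 + p.2 + 1 < m),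
      ∀ y ∈ ((Finset.range m ×ˢ Finset.range m).filter fun p => p.1 + p.2 + 1 < m),
      (((x.1 : ℝ) + 1 / 2, (x.2 : ℝ) + 1 / 2) : ℝ × ℝ) = ((y.1 : ℝ) + 1 / 2, (y.2 : ℝ) + 1 / 2)
        → x = y := by
    intro x _ y _ hxy
    have h1 := congrArg Prod.fst hxy
    have h2 := congrArg Prod.snd hxy
    simp only at h1 h2
    have g1 : x.1 = y.1 := by exact_mod_cast (by linarith : (x.1 : ℝ) = y.1)
    have g2 : x.2 = y.2 := by exact_mod_cast (by linarith : (x.2 : ℝ) = y.2)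
    exact Prod.ext g1 g2
  rw [Nfus, NSfin, Finset.sum_image hinj]
  have hpt : ∀ pq ∈ ((Finset.range m ×ˢ Finset.range m).filter fun p => p.1 + p.2 + 1 < m),
      Smat m u ((pq.1 : ℝ) + 1 / 2, (pq.2 : ℝ) + 1 / 2) *
          Smat m u' ((pq.1 : ℝ) + 1 / 2, (pq.2 : ℝ) + 1 / 2) *
          Smat m u'' ((pq.1 : ℝ) + 1 / 2, (pq.2 : ℝ) + 1 / 2) /
          Smat m (1 / 2, 1 / 2) ((pq.1 : ℝ) + 1 / 2, (pq.2 : ℝ) + 1 / 2)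
        = (4 / (m : ℂ) ^ 2) *
          (Complex.exp ((Real.pi : ℂ) * I * ((C₁ + C₂ + C₃ : ℤ) : ℂ) * ((pq.1 : ℂ) - pq.2) / m) *
            (Complex.sin ((Real.pi : ℂ) * B₁ * ((pq.1 : ℂ) + pq.2 + 1) / m) *
              Complex.sin ((Real.pi : ℂ) * B₂ * ((pq.1 : ℂ) + pq.2 + 1) / m) *
              Complex.sin ((Real.pi : ℂ) * B₃ * ((pq.1 : ℂ) + pq.2 + 1) / m) /
              Complex.sin ((Real.pi : ℂ) * ((pq.1 : ℂ) + pq.2 + 1) / m))) := by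
    intro pq hpq
    simp only [Finset.mem_filter, Finset.mem_product, Finset.mem_range] at hpq
    have hlt : ((pq.1 : ℝ) + pq.2 + 1) < m := by exact_mod_cast hpq.2
    have hS0 : Complex.sin ((Real.pi : ℂ) * ((pq.1 : ℂ) + pq.2 + 1) / m) ≠ 0 := by
      have hsin : 0 < Real.sin (Real.pi * ((pq.1 : ℝ) + pq.2 + 1) / m) := by
        apply Real.sin_pos_of_pos_of_lt_pi
        · positivity
        · rw [div_lt_iff₀ hmR]
          nlinarith [Real.pi_pos]
      have h0 : ((Real.sin (Real.pi * ((pq.1 : ℝ) + pq.2 + 1) / m) : ℝ) : ℂ) ≠ 0 := by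
        exact_mod_cast hsin.ne'
      rw [Complex.ofReal_sin] at h0
      convert h0 using 2
      push_cast
      ring
    rw [Smat_eval e1 f1, Smat_eval e2 f2, Smat_eval e3 f3, Smat0_eval]
    have hA : Complex.exp ((Real.pi : ℂ) * I * C₁ * ((pq.1 : ℂ) - pq.2) / m) *
        Complex.exp ((Real.pi : ℂ) * I * C₂ * ((pq.1 : ℂ) - pq.2) / m) *
        Complex.exp ((Real.pi : ℂ) * I * C₃ * ((pq.1 : ℂ) - pq.2) / m)
        = Complex.exp ((Real.pi : ℂ) * I * ((C₁ + C₂ + C₃ : ℤ) : ℂ) * ((pq.1 : ℂ) - pq.2) / m) := by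
      rw [← Complex.exp_add, ← Complex.exp_add]
      congr 1
      push_cast
      ring
    rw [← hA]
    field_simp
    ring
  rw [Finset.sum_congr rfl hpt, ← Finset.mul_sum,
    core m B₁ B₂ B₃ (C₁ + C₂ + C₃) hodd hD', mul_zero]
end
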